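/- arXiv:2003.02915 — 3 statements merged into one kernel-verified Lean document; each statement's English description precedes it below -/
import Mathlib

section
/- For all n ≥ k ≥ 1, LB_{n,k}(1/23, q) = RS_{n,k}(12/3, q) as polynomials in q, where both equal Σ_{j=1}^{k} q^{j-1} when n > k and equal 1 when n = k. -/
open Finset Polynomial

/-- Set partitions of `[n] = {1, …, n}`, modeled as finpartitions of `Fin n`. -/
abbrev SP (n : ℕ) := Finpartition (Finset.univ : Finset (Fin n))

noncomputable instance (n : ℕ) : Fintype (SP n) :=
  Fintype.ofInjective Finpartition.parts fun _ _ h => Finpartition.ext h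

/-- `i` and `j` lie in the same block of the set partition `P`. -/
def inSameBlock {n : ℕ} (P : SP n) (i j : Fin n) : Prop :=
  ∃ B ∈ P.parts, i ∈ B ∧ j ∈ B

/-- `P` avoids the pattern `1/2/3`: no three elements lie in three pairwise distinct blocks. -/
def avoids1_2_3 {n : ℕ} (P : SP n) : Prop :=
  ¬ ∃ a b c : Fin n, a < b ∧ b < c ∧
    ¬ inSameBlock P a b ∧ ¬ inSameBlock P b c ∧ ¬ inSameBlock P a c

/-- `P` avoids the pattern `13/2`. -/
def avoids13_2 {n : ℕ} (P : SP n) : Prop :=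
  ¬ ∃ a b c : Fin n, a < b ∧ b < c ∧ inSameBlock P a c ∧ ¬ inSameBlock P a b

/-- `P` avoids the pattern `1/23`. -/
def avoids1_23 {n : ℕ} (P : SP n) : Prop :=
  ¬ ∃ a b c : Fin n, a < b ∧ b < c ∧ inSameBlock P b c ∧ ¬ inSameBlock P a b

/-- `P` avoids the pattern `12/3`. -/
def avoids12_3 {n : ℕ} (P : SP n) : Prop :=
  ¬ ∃ a b c : Fin n, a < b ∧ b < c ∧ inSameBlock P a b ∧ ¬ inSameBlock P a c

/-- `P` avoids the pattern `123`: every block has at most two elements. -/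
def avoids123 {n : ℕ} (P : SP n) : Prop :=
  ∀ B ∈ P.parts, B.card ≤ 2

/-- The block of `P` containing `i`. -/
def blockOf {n : ℕ} (P : SP n) (i : Fin n) : Finset (Fin n) :=
  (P.parts.filter (fun B => i ∈ B)).sup id

/-- The restricted growth function of `P`: the letter at position `i` is the index
(starting from 1) of the block containing `i`, blocks being ordered by increasing minima. -/
def rgf {n : ℕ} (P : SP n) (i : Fin n) : ℕ :=
  (P.parts.filter (fun B => B.min ≤ (blockOf P i).min)).card

/-- The left-bigger statistic of Wachs and White. -/
def lbStat {n : ℕ} (w : Fin n → ℕ) : ℕ :=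
  ∑ j : Fin n, (((Finset.univ.filter (fun i => i < j)).image w).filter (fun v => w j < v)).card

/-- The left-smaller statistic of Wachs and White. -/
def lsStat {n : ℕ} (w : Fin n → ℕ) : ℕ :=
  ∑ j : Fin n, (((Finset.univ.filter (fun i => i < j)).image w).filter (fun v => v < w j)).card

/-- The right-bigger statistic of Wachs and White. -/
def rbStat {n : ℕ} (w : Fin n → ℕ) : ℕ :=
  ∑ j : Fin n, (((Finset.univ.filter (fun i => j < i)).image w).filter (fun v => w j < v)).card

/-- The right-smaller statistic of Wachs and White. -/
def rsStat {n : ℕ} (w : Fin n → ℕ) : ℕ :=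
  ∑ j : Fin n, (((Finset.univ.filter (fun i => j < i)).image w).filter (fun v => v < w j)).card

open Classical in
/-- The generating function `∑ q^{stat(π)}` over `k`-block partitions of `[n]` avoiding
a given family of patterns (described by the avoidance predicate `avoid`). -/
noncomputable def genPoly (n k : ℕ) (avoid : SP n → Prop) (stat : (Fin n → ℕ) → ℕ) :
    Polynomial ℕ :=
  ∑ P ∈ Finset.univ.filter (fun P : SP n => P.parts.card = k ∧ avoid P),
    Polynomial.X ^ (stat (rgf P))
section Aux
variable {n : ℕ}

lemma exists_part (P : SP n) (i : Fin n) : ∃ B ∈ P.parts, i ∈ B := by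
  obtain ⟨B, ⟨hB, hi⟩, -⟩ := P.existsUnique_mem (a := i) (mem_univ i)
  exact ⟨B, hB, hi⟩

lemma blockOf_eq (P : SP n) {B : Finset (Fin n)} {i : Fin n} (hB : B ∈ P.parts) (hi : i ∈ B) :
    blockOf P i = B := by
  have : P.parts.filter (fun C => i ∈ C) = {B} := by
    apply Finset.eq_singleton_iff_unique_mem.mpr
    refine ⟨mem_filter.mpr ⟨hB, hi⟩, fun C hC => ?_⟩
    rw [mem_filter] at hC
    exact P.eq_of_mem_parts hC.1 hB hC.2 hi
  simp [blockOf, this]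

lemma blockOf_mem_parts (P : SP n) (i : Fin n) : blockOf P i ∈ P.parts := by
  obtain ⟨B, hB, hi⟩ := exists_part P i
  rw [blockOf_eq P hB hi]; exact hB

lemma mem_blockOf (P : SP n) (i : Fin n) : i ∈ blockOf P i := by
  obtain ⟨B, hB, hi⟩ := exists_part P i
  rw [blockOf_eq P hB hi]; exact hi

lemma inSameBlock_iff (P : SP n) (i j : Fin n) : inSameBlock P i j ↔ j ∈ blockOf P i := by
  constructor
  · rintro ⟨B, hB, hi, hj⟩
    rw [blockOf_eq P hB hi]; exact hj
  · intro h
    exact ⟨blockOf P i, blockOf_mem_parts P i, mem_blockOf P i, h⟩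

lemma inSameBlock_iff' (P : SP n) (i j : Fin n) :
    inSameBlock P i j ↔ ∀ B ∈ P.parts, i ∈ B → j ∈ B := by
  rw [inSameBlock_iff]
  constructor
  · intro h B hB hi
    rwa [blockOf_eq P hB hi] at h
  · intro h
    exact h _ (blockOf_mem_parts P i) (mem_blockOf P i)

/-- The parts of the partition of `Fin n` with one distinguished block `B` and
all other elements singletons. -/
def oneBigParts (B : Finset (Fin n)) : Finset (Finset (Fin n)) :=
  insert B ((Bᶜ).image (fun i => {i}))

lemma mem_oneBigParts {B C : Finset (Fin n)} :
    C ∈ oneBigParts B ↔ C = B ∨ ∃ i ∉ B, C = {i} := by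
  simp [oneBigParts, eq_comm]

/-- The set partition of `Fin n` with one distinguished block `B` and singletons elsewhere. -/
def oneBig (B : Finset (Fin n)) (hB : B.Nonempty) : SP n where
  parts := oneBigParts B
  supIndep := by
    rw [Finset.supIndep_iff_pairwiseDisjoint]
    intro C hC D hD hne
    rw [mem_coe, mem_oneBigParts] at hC hD
    rcases hC with rfl | ⟨i, hi, rfl⟩ <;> rcases hD with rfl | ⟨j, hj, rfl⟩
    · exact absurd rfl hne
    · exact Finset.disjoint_singleton_right.mpr hj
    · exact Finset.disjoint_singleton_left.mpr hi
    · refine Finset.disjoint_singleton_right.mpr ?_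
      simp only [id_eq, mem_singleton]
      rintro rfl; exact hne rfl
  sup_parts := by
    apply Finset.eq_univ_of_forall
    intro i
    rw [show (oneBigParts B).sup id = (oneBigParts B).sup id from rfl, Finset.mem_sup]
    by_cases hi : i ∈ B
    · exact ⟨B, by simp [oneBigParts], hi⟩
    · exact ⟨{i}, mem_oneBigParts.mpr (Or.inr ⟨i, hi, rfl⟩), mem_singleton_self i⟩
  bot_notMem := by
    rw [Finset.bot_eq_empty, mem_oneBigParts]
    push_neg
    exact ⟨fun h => hB.ne_empty h.symm, fun i _ h => Finset.singleton_ne_empty i h.symm⟩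

lemma oneBig_parts (B : Finset (Fin n)) (hB : B.Nonempty) : (oneBig B hB).parts = oneBigParts B := rfl

lemma card_oneBigParts (B : Finset (Fin n)) (hB : B.Nonempty) :
    (oneBigParts B).card = n - B.card + 1 := by
  have h1 : B ∉ (Bᶜ).image (fun i : Fin n => ({i} : Finset (Fin n))) := by
    simp only [mem_image, mem_compl]
    rintro ⟨i, hi, h⟩
    exact hi (h ▸ mem_singleton_self i)
  rw [oneBigParts, Finset.card_insert_of_notMem h1,
    Finset.card_image_of_injective _ (fun a b h => by simpa using h),
    Finset.card_compl, Fintype.card_fin]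

lemma blockOf_oneBig_mem {B : Finset (Fin n)} (hB : B.Nonempty) {i : Fin n} (hi : i ∈ B) :
    blockOf (oneBig B hB) i = B :=
  blockOf_eq _ (by rw [oneBig_parts, mem_oneBigParts]; left; rfl) hi

lemma blockOf_oneBig_not_mem {B : Finset (Fin n)} (hB : B.Nonempty) {i : Fin n} (hi : i ∉ B) :
    blockOf (oneBig B hB) i = {i} :=
  blockOf_eq _ (by rw [oneBig_parts, mem_oneBigParts]; right; exact ⟨i, hi, rfl⟩)
    (mem_singleton_self i)

lemma inSameBlock_oneBig {B : Finset (Fin n)} (hB : B.Nonempty) (i j : Fin n) :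
    inSameBlock (oneBig B hB) i j ↔ (i ∈ B ∧ j ∈ B) ∨ i = j := by
  rw [inSameBlock_iff]
  by_cases hi : i ∈ B
  · rw [blockOf_oneBig_mem hB hi]
    constructor
    · intro h; left; exact ⟨hi, h⟩
    · rintro (⟨-, h⟩ | rfl) <;> [exact h; exact hi]
  · rw [blockOf_oneBig_not_mem hB hi, mem_singleton]
    constructor
    · rintro rfl; right; rfl
    · rintro (⟨h, -⟩ | rfl) <;> [exact absurd h hi; rfl]

end Aux
section Aux2
variable {n : ℕ}

lemma card_filter_val_mem (s : Finset ℕ) (hs : ∀ m ∈ s, m < n) :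
    (Finset.univ.filter (fun i : Fin n => i.val ∈ s)).card = s.card := by
  rw [show Finset.univ.filter (fun i : Fin n => i.val ∈ s) = s.attachFin hs by
    ext i; simp [Finset.mem_attachFin]]
  exact Finset.card_attachFin s hs

lemma card_filter_val_Ico (a b : ℕ) (hb : b ≤ n) :
    (Finset.univ.filter (fun i : Fin n => a ≤ i.val ∧ i.val < b)).card = b - a := by
  have : (Finset.univ.filter (fun i : Fin n => a ≤ i.val ∧ i.val < b)) =
      (Finset.univ.filter (fun i : Fin n => i.val ∈ Finset.Ico a b)) := by
    apply Finset.filter_congr; intro i _; simp [Finset.mem_Ico]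
  rw [this, card_filter_val_mem _ (fun m hm => lt_of_lt_of_le (Finset.mem_Ico.mp hm).2 hb),
    Nat.card_Ico]

/-- The big block for the `1/23`-avoiding family: `[0, n-k-1] ∪ {t}`. -/
def blk1 (k : ℕ) (t : Fin n) : Finset (Fin n) :=
  Finset.univ.filter (fun i => i.val < n - k ∨ i = t)

/-- The big block for the `12/3`-avoiding family: `{s} ∪ [k, n-1]`. -/
def blk2 (k : ℕ) (s : Fin n) : Finset (Fin n) :=
  Finset.univ.filter (fun i => k ≤ i.val ∨ i = s)

lemma mem_blk1 {k : ℕ} {t i : Fin n} : i ∈ blk1 k t ↔ i.val < n - k ∨ i = t := by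
  simp [blk1]

lemma mem_blk2 {k : ℕ} {s i : Fin n} : i ∈ blk2 k s ↔ k ≤ i.val ∨ i = s := by
  simp [blk2]

lemma blk1_nonempty {k : ℕ} (t : Fin n) : (blk1 k t).Nonempty :=
  ⟨t, mem_blk1.mpr (Or.inr rfl)⟩

lemma blk2_nonempty {k : ℕ} (s : Fin n) : (blk2 k s).Nonempty :=
  ⟨s, mem_blk2.mpr (Or.inr rfl)⟩

lemma card_blk1 {k : ℕ} {t : Fin n} (ht : n - k ≤ t.val) : (blk1 k t).card = n - k + 1 := by
  have : blk1 k t = insert t (Finset.univ.filter (fun i : Fin n => 0 ≤ i.val ∧ i.val < n - k)) := by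
    ext i
    simp only [mem_blk1, Finset.mem_insert, Finset.mem_filter, Finset.mem_univ, true_and]
    constructor
    · rintro (h | rfl)
      · right; exact ⟨Nat.zero_le _, h⟩
      · left; rfl
    · rintro (rfl | ⟨-, h⟩)
      · right; rfl
      · left; exact h
  rw [this, Finset.card_insert_of_notMem (by
      simp only [Finset.mem_filter]; rintro ⟨-, -, h⟩; omega),
    card_filter_val_Ico 0 (n - k) (Nat.sub_le n k)]
  omega

lemma card_blk2 {k : ℕ} (hkn : k ≤ n) {s : Fin n} (hs : s.val < k) :
    (blk2 k s).card = n - k + 1 := by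
  have : blk2 k s = insert s (Finset.univ.filter (fun i : Fin n => k ≤ i.val ∧ i.val < n)) := by
    ext i
    simp only [mem_blk2, Finset.mem_insert, Finset.mem_filter, Finset.mem_univ, true_and]
    constructor
    · rintro (h | rfl)
      · right; exact ⟨h, i.isLt⟩
      · left; rfl
    · rintro (rfl | ⟨h, -⟩)
      · right; rfl
      · left; exact h
  rw [this, Finset.card_insert_of_notMem (by
      simp only [Finset.mem_filter]; rintro ⟨-, h, -⟩; omega),
    card_filter_val_Ico k n le_rfl]

lemma card_parts_oneBig_blk1 {k : ℕ} (hk : 1 ≤ k) (hkn : k ≤ n) {t : Fin n}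
    (ht : n - k ≤ t.val) : (oneBig (blk1 k t) (blk1_nonempty t)).parts.card = k := by
  rw [oneBig_parts, card_oneBigParts _ (blk1_nonempty t), card_blk1 ht]
  omega

lemma card_parts_oneBig_blk2 {k : ℕ} (hk : 1 ≤ k) (hkn : k ≤ n) {s : Fin n}
    (hs : s.val < k) : (oneBig (blk2 k s) (blk2_nonempty s)).parts.card = k := by
  rw [oneBig_parts, card_oneBigParts _ (blk2_nonempty s), card_blk2 hkn hs]
  omega

lemma avoids1_23_oneBig_blk1 {k : ℕ} (hkn : k < n) {t : Fin n} (ht : n - k ≤ t.val) :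
    avoids1_23 (oneBig (blk1 k t) (blk1_nonempty t)) := by
  rintro ⟨a, b, c, hab, hbc, hbc', hab'⟩
  rw [inSameBlock_oneBig] at hbc'
  rcases hbc' with ⟨hb, hc⟩ | rfl
  · -- b, c ∈ blk1; b < c so b ≠ t is forced unless c also equals t
    have hb' : b.val < n - k := by
      rcases mem_blk1.mp hb with h | rfl
      · exact h
      · rcases mem_blk1.mp hc with h | rfl
        · omega
        · exact absurd rfl (ne_of_lt hbc)
    apply hab'
    rw [inSameBlock_oneBig]
    left
    exact ⟨mem_blk1.mpr (Or.inl (by omega)), hb⟩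
  · exact absurd rfl (ne_of_lt hbc)

lemma avoids12_3_oneBig_blk2 {k : ℕ} (hk : 1 ≤ k) {s : Fin n} (hs : s.val < k) :
    avoids12_3 (oneBig (blk2 k s) (blk2_nonempty s)) := by
  rintro ⟨a, b, c, hab, hbc, hab', hac'⟩
  rw [inSameBlock_oneBig] at hab'
  rcases hab' with ⟨ha, hb⟩ | rfl
  · have hb' : k ≤ b.val := by
      rcases mem_blk2.mp hb with h | rfl
      · exact h
      · rcases mem_blk2.mp ha with h | rfl
        · omega
        · exact absurd rfl (ne_of_lt hab)
    apply hac'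
    rw [inSameBlock_oneBig]
    left
    exact ⟨ha, mem_blk2.mpr (Or.inl (by omega))⟩
  · exact absurd rfl (ne_of_lt hab)

end Aux2
section Classify
variable {n : ℕ}

lemma down_closed_of_avoids1_23 {P : SP n} (h : avoids1_23 P) {B : Finset (Fin n)}
    (hB : B ∈ P.parts) {b c : Fin n} (hb : b ∈ B) (hc : c ∈ B) (hbc : b < c)
    {a : Fin n} (ha : a < b) : a ∈ B := by
  by_contra hab
  refine h ⟨a, b, c, ha, hbc, ⟨B, hB, hb, hc⟩, ?_⟩
  rintro ⟨C, hC, haC, hbC⟩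
  exact hab (P.eq_of_mem_parts hC hB hbC hb ▸ haC)

lemma up_closed_of_avoids12_3 {P : SP n} (h : avoids12_3 P) {B : Finset (Fin n)}
    (hB : B ∈ P.parts) {a b : Fin n} (ha : a ∈ B) (hb : b ∈ B) (hab : a < b)
    {c : Fin n} (hc : b < c) : c ∈ B := by
  by_contra hac
  refine h ⟨a, b, c, hab, hc, ⟨B, hB, ha, hb⟩, ?_⟩
  rintro ⟨C, hC, haC, hcC⟩
  exact hac (P.eq_of_mem_parts hC hB haC ha ▸ hcC)

lemma exists_big_part {k : ℕ} (hkn : k < n) {P : SP n} (hc : P.parts.card = k) :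
    ∃ B ∈ P.parts, 2 ≤ B.card := by
  by_contra hall
  push_neg at hall
  have h1 : ∀ B ∈ P.parts, B.card = 1 := by
    intro B hB
    have hne : B.Nonempty := P.nonempty_of_mem_parts hB
    have := hall B hB
    have := Finset.card_pos.mpr hne
    omega
  have : n = k := by
    have := P.sum_card_parts
    rw [Finset.sum_congr rfl h1] at this
    simp at this
    omega
  omega

lemma unique_big_part_1 {P : SP n} (hP : avoids1_23 P) {B C : Finset (Fin n)}
    (hB : B ∈ P.parts) (hC : C ∈ P.parts) (h2B : 2 ≤ B.card) (h2C : 2 ≤ C.card) : B = C := by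
  by_contra hne
  have hBne : B.Nonempty := Finset.card_pos.mp (by omega)
  have hCne : C.Nonempty := Finset.card_pos.mp (by omega)
  rcases lt_or_gt_of_ne (fun h : B.min' hBne = C.min' hCne =>
      hne (P.eq_of_mem_parts hB hC (h ▸ B.min'_mem hBne) (C.min'_mem hCne))) with hlt | hlt
  · have hmm : C.min' hCne < C.max' hCne := Finset.min'_lt_max'_of_card C (by omega)
    have : B.min' hBne ∈ C :=
      down_closed_of_avoids1_23 hP hC (C.min'_mem hCne) (C.max'_mem hCne) hmm hlt
    exact hne (P.eq_of_mem_parts hB hC (B.min'_mem hBne) this)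
  · have hmm : B.min' hBne < B.max' hBne := Finset.min'_lt_max'_of_card B (by omega)
    have : C.min' hCne ∈ B :=
      down_closed_of_avoids1_23 hP hB (B.min'_mem hBne) (B.max'_mem hBne) hmm hlt
    exact hne (P.eq_of_mem_parts hB hC this (C.min'_mem hCne))

lemma unique_big_part_2 {P : SP n} (hP : avoids12_3 P) {B C : Finset (Fin n)}
    (hB : B ∈ P.parts) (hC : C ∈ P.parts) (h2B : 2 ≤ B.card) (h2C : 2 ≤ C.card) : B = C := by
  by_contra hne
  have hBne : B.Nonempty := Finset.card_pos.mp (by omega)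
  have hCne : C.Nonempty := Finset.card_pos.mp (by omega)
  rcases lt_or_gt_of_ne (fun h : B.max' hBne = C.max' hCne =>
      hne (P.eq_of_mem_parts hB hC (h ▸ B.max'_mem hBne) (C.max'_mem hCne))) with hlt | hlt
  · have hmm : B.min' hBne < B.max' hBne := Finset.min'_lt_max'_of_card B (by omega)
    have : C.max' hCne ∈ B :=
      up_closed_of_avoids12_3 hP hB (B.min'_mem hBne) (B.max'_mem hBne) hmm hlt
    exact hne (P.eq_of_mem_parts hB hC this (C.max'_mem hCne))
  · have hmm : C.min' hCne < C.max' hCne := Finset.min'_lt_max'_of_card C (by omega)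
    have : B.max' hBne ∈ C :=
      up_closed_of_avoids12_3 hP hC (C.min'_mem hCne) (C.max'_mem hCne) hmm hlt
    exact hne (P.eq_of_mem_parts hB hC (B.max'_mem hBne) this)

/-- If all parts other than `B` are singletons, the parts are `oneBigParts B`. -/
lemma parts_eq_oneBigParts {P : SP n} {B : Finset (Fin n)} (hB : B ∈ P.parts)
    (hsing : ∀ C ∈ P.parts, C ≠ B → C.card = 1) : P.parts = oneBigParts B := by
  ext C
  rw [mem_oneBigParts]
  constructor
  · intro hC
    by_cases hCB : C = B
    · exact Or.inl hCB
    · right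
      obtain ⟨c, hc⟩ := Finset.card_eq_one.mp (hsing C hC hCB)
      refine ⟨c, fun hcB => hCB ?_, hc⟩
      exact P.eq_of_mem_parts hC hB (hc ▸ Finset.mem_singleton_self c) hcB
  · rintro (rfl | ⟨i, hi, rfl⟩)
    · exact hB
    · have hbi := blockOf_mem_parts P i
      have hmi := mem_blockOf P i
      have hne : blockOf P i ≠ B := fun h => hi (h ▸ hmi)
      obtain ⟨c, hc⟩ := Finset.card_eq_one.mp (hsing _ hbi hne)
      rw [hc] at hmi
      rw [Finset.mem_singleton] at hmi
      subst hmi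
      rwa [← hc]

end Classify
section Classify2
variable {n : ℕ}

lemma classify1 {k : ℕ} (hk : 1 ≤ k) (hkn : k < n) {P : SP n} (hP : avoids1_23 P)
    (hc : P.parts.card = k) :
    ∃ t : Fin n, n - k ≤ t.val ∧ P.parts = oneBigParts (blk1 k t) := by
  obtain ⟨B, hB, h2B⟩ := exists_big_part hkn hc
  have hBne : B.Nonempty := Finset.card_pos.mp (by omega)
  have hsing : ∀ C ∈ P.parts, C ≠ B → C.card = 1 := by
    intro C hC hCB
    have h1 : 1 ≤ C.card := Finset.card_pos.mpr (P.nonempty_of_mem_parts hC)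
    by_contra h
    exact hCB (unique_big_part_1 hP hC hB (by omega) h2B)
  have hparts : P.parts = oneBigParts B := parts_eq_oneBigParts hB hsing
  have hcardB : B.card = n - k + 1 := by
    have h1 : B.card ≤ n := by
      have := Finset.card_le_card (Finset.subset_univ B)
      simpa using this
    have := card_oneBigParts B hBne
    rw [hparts, this] at hc
    omega
  set t := B.max' hBne with ht_def
  have hterase : (B.erase t).Nonempty := by
    rw [← Finset.card_pos, Finset.card_erase_of_mem (B.max'_mem hBne)]
    omega
  set m := (B.erase t).max' hterase with hm_def
  have hmB : m ∈ B := Finset.mem_of_mem_erase ((B.erase t).max'_mem hterase)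
  have hmt : m < t := by
    have h1 : m ≤ t := Finset.le_max' B m hmB
    have h2 : m ≠ t := Finset.ne_of_mem_erase ((B.erase t).max'_mem hterase)
    exact lt_of_le_of_ne h1 h2
  have hBstruct : ∀ i : Fin n, i ∈ B ↔ (i.val ≤ m.val ∨ i = t) := by
    intro i
    constructor
    · intro hi
      by_cases hit : i = t
      · exact Or.inr hit
      · left
        exact Finset.le_max' _ i (Finset.mem_erase.mpr ⟨hit, hi⟩)
    · rintro (him | rfl)
      · rcases eq_or_lt_of_le (show i ≤ m from him) with rfl | hlt
        · exact hmB
        · exact down_closed_of_avoids1_23 hP hB hmB (B.max'_mem hBne) hmt hlt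
      · exact B.max'_mem hBne
  have hmval : m.val = n - k - 1 := by
    have hBeq : B = insert t (Finset.univ.filter (fun i : Fin n => 0 ≤ i.val ∧ i.val < m.val + 1)) := by
      ext i
      rw [hBstruct i]
      simp only [Finset.mem_insert, Finset.mem_filter, Finset.mem_univ, true_and]
      constructor
      · rintro (h | rfl)
        · right; exact ⟨Nat.zero_le _, by omega⟩
        · left; rfl
      · rintro (rfl | ⟨-, h⟩)
        · right; rfl
        · left; omega
    have hcard2 : B.card = (m.val + 1) + 1 := by
      rw [hBeq, Finset.card_insert_of_notMem (by
          simp only [Finset.mem_filter]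
          rintro ⟨-, -, h⟩
          exact absurd hmt (by omega)),
        card_filter_val_Ico 0 (m.val + 1) (by omega)]
      omega
    omega
  have htval : n - k ≤ t.val := by
    have := hmt
    rw [Fin.lt_def] at this
    omega
  refine ⟨t, htval, ?_⟩
  rw [hparts]
  congr 1
  ext i
  rw [mem_blk1, hBstruct i]
  constructor
  · rintro (h | rfl)
    · left; omega
    · right; rfl
  · rintro (h | rfl)
    · left; omega
    · right; rfl

lemma classify2 {k : ℕ} (hk : 1 ≤ k) (hkn : k < n) {P : SP n} (hP : avoids12_3 P)
    (hc : P.parts.card = k) :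
    ∃ s : Fin n, s.val < k ∧ P.parts = oneBigParts (blk2 k s) := by
  obtain ⟨B, hB, h2B⟩ := exists_big_part hkn hc
  have hBne : B.Nonempty := Finset.card_pos.mp (by omega)
  have hsing : ∀ C ∈ P.parts, C ≠ B → C.card = 1 := by
    intro C hC hCB
    have h1 : 1 ≤ C.card := Finset.card_pos.mpr (P.nonempty_of_mem_parts hC)
    by_contra h
    exact hCB (unique_big_part_2 hP hC hB (by omega) h2B)
  have hparts : P.parts = oneBigParts B := parts_eq_oneBigParts hB hsing
  have hcardB : B.card = n - k + 1 := by
    have h1 : B.card ≤ n := by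
      have := Finset.card_le_card (Finset.subset_univ B)
      simpa using this
    have := card_oneBigParts B hBne
    rw [hparts, this] at hc
    omega
  set s := B.min' hBne with hs_def
  have hserase : (B.erase s).Nonempty := by
    rw [← Finset.card_pos, Finset.card_erase_of_mem (B.min'_mem hBne)]
    omega
  set m := (B.erase s).min' hserase with hm_def
  have hmB : m ∈ B := Finset.mem_of_mem_erase ((B.erase s).min'_mem hserase)
  have hsm : s < m := by
    have h1 : s ≤ m := Finset.min'_le B m hmB
    have h2 : m ≠ s := Finset.ne_of_mem_erase ((B.erase s).min'_mem hserase)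
    exact lt_of_le_of_ne h1 (Ne.symm h2)
  have hBstruct : ∀ i : Fin n, i ∈ B ↔ (m.val ≤ i.val ∨ i = s) := by
    intro i
    constructor
    · intro hi
      by_cases his : i = s
      · exact Or.inr his
      · left
        exact Finset.min'_le _ i (Finset.mem_erase.mpr ⟨his, hi⟩)
    · rintro (him | rfl)
      · rcases eq_or_lt_of_le (show m ≤ i from him) with rfl | hlt
        · exact hmB
        · exact up_closed_of_avoids12_3 hP hB (B.min'_mem hBne) hmB hsm hlt
      · exact B.min'_mem hBne
  have hmval : m.val = k := by
    have hBeq : B = insert s (Finset.univ.filter (fun i : Fin n => m.val ≤ i.val ∧ i.val < n)) := by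
      ext i
      rw [hBstruct i]
      simp only [Finset.mem_insert, Finset.mem_filter, Finset.mem_univ, true_and]
      constructor
      · rintro (h | rfl)
        · right; exact ⟨h, i.isLt⟩
        · left; rfl
      · rintro (rfl | ⟨h, -⟩)
        · right; rfl
        · left; exact h
    have hcard2 : B.card = (n - m.val) + 1 := by
      rw [hBeq, Finset.card_insert_of_notMem (by
          simp only [Finset.mem_filter]
          rintro ⟨-, h, -⟩
          exact absurd hsm (by omega)),
        card_filter_val_Ico m.val n le_rfl]
    have := m.isLt
    omega
  have hsval : s.val < k := by
    have := hsm
    rw [Fin.lt_def] at this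
    omega
  refine ⟨s, hsval, ?_⟩
  rw [hparts]
  congr 1
  ext i
  rw [mem_blk2, hBstruct i]
  constructor
  · rintro (h | rfl)
    · left; omega
    · right; rfl
  · rintro (h | rfl)
    · left; omega
    · right; rfl

end Classify2
section Rgf
variable {n : ℕ}

lemma singletonFin_injective : Function.Injective (fun i : Fin n => ({i} : Finset (Fin n))) :=
  fun a b h => by simpa using h

lemma rgf_oneBig (B : Finset (Fin n)) (hB : B.Nonempty) (j : Fin n) :
    rgf (oneBig B hB) j =
      (if B.min ≤ (blockOf (oneBig B hB) j).min then 1 else 0) +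
        (Bᶜ.filter (fun i : Fin n =>
          ((i : Fin n) : WithTop (Fin n)) ≤ (blockOf (oneBig B hB) j).min)).card := by
  classical
  set M := (blockOf (oneBig B hB) j).min with hM
  rw [rgf, oneBig_parts, oneBigParts, Finset.filter_insert]
  have himg : ((Bᶜ.image (fun i : Fin n => ({i} : Finset (Fin n)))).filter (fun C => C.min ≤ M))
      = (Bᶜ.filter (fun i : Fin n => ((i : Fin n) : WithTop (Fin n)) ≤ M)).image
          (fun i : Fin n => ({i} : Finset (Fin n))) := by
    rw [Finset.filter_image]
    congr 1
  split_ifs with hcond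
  · rw [Finset.card_insert_of_notMem (by
      rw [himg]
      simp only [Finset.mem_image, Finset.mem_filter, Finset.mem_compl]
      rintro ⟨i, ⟨hi, -⟩, h⟩
      exact hi (h ▸ Finset.mem_singleton_self i)), himg,
      Finset.card_image_of_injective _ singletonFin_injective]
    omega
  · rw [himg, Finset.card_image_of_injective _ singletonFin_injective]
    omega

end Rgf
section Fam1
variable {n k : ℕ} {t : Fin n}

lemma rgf_blk1_mem (hkn : k < n) (ht : n - k ≤ t.val) {i : Fin n} (hi : i ∈ blk1 k t) :
    rgf (oneBig (blk1 k t) (blk1_nonempty t)) i = 1 := by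
  rw [rgf_oneBig, blockOf_oneBig_mem _ hi, if_pos le_rfl]
  have : ((blk1 k t)ᶜ.filter (fun x : Fin n =>
      ((x : Fin n) : WithTop (Fin n)) ≤ (blk1 k t).min)) = ∅ := by
    rw [Finset.filter_eq_empty_iff]
    intro x hx
    rw [Finset.mem_compl] at hx
    intro hle
    have hz : (⟨0, lt_of_le_of_lt (Nat.zero_le k) hkn⟩ : Fin n) ∈ blk1 k t :=
      mem_blk1.mpr (Or.inl (by simp; omega))
    have h2 : (blk1 k t).min ≤ ((⟨0, _⟩ : Fin n) : WithTop (Fin n)) := Finset.min_le hz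
    have h3 : ((x : Fin n) : WithTop (Fin n)) ≤ ((⟨0, _⟩ : Fin n) : WithTop (Fin n)) :=
      le_trans hle h2
    have h4 : x ≤ (⟨0, lt_of_le_of_lt (Nat.zero_le k) hkn⟩ : Fin n) := by exact_mod_cast h3
    have : x.val = 0 := Nat.le_zero.mp h4
    exact hx (mem_blk1.mpr (Or.inl (by omega)))
  rw [this]
  simp

lemma rgf_blk1_not_mem (hkn : k < n) {i : Fin n} (hi : i ∉ blk1 k t) :
    rgf (oneBig (blk1 k t) (blk1_nonempty t)) i =
      1 + ((blk1 k t)ᶜ.filter (fun x : Fin n => x ≤ i)).card := by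
  rw [rgf_oneBig, blockOf_oneBig_not_mem _ hi, Finset.min_singleton]
  have hz : (⟨0, lt_of_le_of_lt (Nat.zero_le k) hkn⟩ : Fin n) ∈ blk1 k t :=
    mem_blk1.mpr (Or.inl (by simp; omega))
  have hcond : (blk1 k t).min ≤ ((i : Fin n) : WithTop (Fin n)) :=
    le_trans (Finset.min_le hz) (by exact_mod_cast (Fin.mk_le_of_le_val (Nat.zero_le i.val) :
      (⟨0, lt_of_le_of_lt (Nat.zero_le k) hkn⟩ : Fin n) ≤ i))
  rw [if_pos hcond]
  have : ((blk1 k t)ᶜ.filter (fun x : Fin n =>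
      ((x : Fin n) : WithTop (Fin n)) ≤ ((i : Fin n) : WithTop (Fin n))))
      = ((blk1 k t)ᶜ.filter (fun x : Fin n => x ≤ i)) := by
    apply Finset.filter_congr
    intro x _
    exact WithTop.coe_le_coe
  rw [this]

lemma rgf_blk1_lt (hkn : k < n) {i j : Fin n} (hi : i ∉ blk1 k t) (hj : j ∉ blk1 k t)
    (hij : i < j) :
    rgf (oneBig (blk1 k t) (blk1_nonempty t)) i < rgf (oneBig (blk1 k t) (blk1_nonempty t)) j := by
  rw [rgf_blk1_not_mem hkn hi, rgf_blk1_not_mem hkn hj]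
  have hsub : ((blk1 k t)ᶜ.filter (fun x : Fin n => x ≤ i)) ⊂
      ((blk1 k t)ᶜ.filter (fun x : Fin n => x ≤ j)) := by
    constructor
    · intro x hx
      rw [Finset.mem_filter] at hx ⊢
      exact ⟨hx.1, le_trans hx.2 (le_of_lt hij)⟩
    · intro hsub'
      have : j ∈ (blk1 k t)ᶜ.filter (fun x : Fin n => x ≤ j) :=
        Finset.mem_filter.mpr ⟨Finset.mem_compl.mpr hj, le_rfl⟩
      have := hsub' this
      rw [Finset.mem_filter] at this
      exact absurd (lt_of_lt_of_le hij this.2) (lt_irrefl i)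
  have := Finset.card_lt_card hsub
  omega

lemma rgf_blk1_two_le (hkn : k < n) {i : Fin n} (hi : i ∉ blk1 k t) :
    2 ≤ rgf (oneBig (blk1 k t) (blk1_nonempty t)) i := by
  rw [rgf_blk1_not_mem hkn hi]
  have : i ∈ (blk1 k t)ᶜ.filter (fun x : Fin n => x ≤ i) :=
    Finset.mem_filter.mpr ⟨Finset.mem_compl.mpr hi, le_rfl⟩
  have := Finset.card_pos.mpr ⟨i, this⟩
  omega

lemma lbStat_blk1 (hkn : k < n) (ht : n - k ≤ t.val) :
    lbStat (rgf (oneBig (blk1 k t) (blk1_nonempty t))) = t.val - (n - k) := by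
  classical
  rw [lbStat, Finset.sum_eq_single t]
  · -- the term at t
    have hwt : rgf (oneBig (blk1 k t) (blk1_nonempty t)) t = 1 :=
      rgf_blk1_mem hkn ht (mem_blk1.mpr (Or.inr rfl))
    have hset : (((Finset.univ.filter (fun i => i < t)).image
          (rgf (oneBig (blk1 k t) (blk1_nonempty t)))).filter
            (fun v => rgf (oneBig (blk1 k t) (blk1_nonempty t)) t < v))
        = (Finset.univ.filter (fun i : Fin n => n - k ≤ i.val ∧ i.val < t.val)).image
            (rgf (oneBig (blk1 k t) (blk1_nonempty t))) := by
      ext v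
      simp only [Finset.mem_filter, Finset.mem_image, Finset.mem_univ, true_and]
      constructor
      · rintro ⟨⟨i, hit, rfl⟩, hgt⟩
        refine ⟨i, ⟨?_, ?_⟩, rfl⟩
        · by_contra hlt
          push_neg at hlt
          have hib : i ∈ blk1 k t := mem_blk1.mpr (Or.inl hlt)
          rw [rgf_blk1_mem hkn ht hib, hwt] at hgt
          omega
        · exact hit
      · rintro ⟨i, ⟨hge, hlt⟩, rfl⟩
        have hi : i ∉ blk1 k t := by
          rw [mem_blk1]
          push_neg
          exact ⟨by omega, fun h => by rw [h] at hlt; omega⟩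
        refine ⟨⟨i, by rwa [Fin.lt_def], rfl⟩, ?_⟩
        rw [hwt]
        have := rgf_blk1_two_le (t := t) hkn hi
        omega
    rw [hset]
    have hD1 : ∀ i ∈ Finset.univ.filter (fun i : Fin n => n - k ≤ i.val ∧ i.val < t.val),
        i ∉ blk1 k t := by
      intro i hi
      rw [Finset.mem_filter] at hi
      rw [mem_blk1]
      push_neg
      exact ⟨by omega, fun h => by rw [h] at hi; omega⟩
    rw [Finset.card_image_of_injOn (by
      intro a ha b hb hab
      by_contra hne
      rcases lt_or_gt_of_ne hne with h | h
      · exact absurd hab (ne_of_lt (rgf_blk1_lt hkn (hD1 a ha) (hD1 b hb) h))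
      · exact absurd hab.symm (ne_of_lt (rgf_blk1_lt hkn (hD1 b hb) (hD1 a ha) h)))]
    rw [card_filter_val_Ico (n - k) t.val (le_of_lt t.isLt)]
  · -- other terms vanish
    intro j _ hjt
    rw [Finset.card_eq_zero, Finset.filter_eq_empty_iff]
    rintro v hv
    rw [Finset.mem_image] at hv
    obtain ⟨i, hi, rfl⟩ := hv
    rw [Finset.mem_filter] at hi
    have hij : i < j := hi.2
    intro hgt
    by_cases hjb : j ∈ blk1 k t
    · have hjv : j.val < n - k := by
        rcases mem_blk1.mp hjb with h | h
        · exact h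
        · exact absurd h hjt
      have hib : i ∈ blk1 k t := mem_blk1.mpr (Or.inl (by
        rw [Fin.lt_def] at hij; omega))
      rw [rgf_blk1_mem hkn ht hib, rgf_blk1_mem hkn ht hjb] at hgt
      omega
    · by_cases hib : i ∈ blk1 k t
      · rw [rgf_blk1_mem hkn ht hib] at hgt
        have := rgf_blk1_two_le (t := t) hkn hjb
        omega
      · exact absurd hgt (not_lt_of_gt (rgf_blk1_lt hkn hib hjb hij))
  · intro h
    exact absurd (Finset.mem_univ t) h

end Fam1
section Fam2
variable {n k : ℕ} {s : Fin n}

lemma blk2_min (hs : s.val < k) : (blk2 k s).min = (s : WithTop (Fin n)) := by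
  apply le_antisymm
  · exact Finset.min_le (mem_blk2.mpr (Or.inr rfl))
  · apply Finset.le_min
    intro x hx
    rw [WithTop.coe_le_coe]
    rcases mem_blk2.mp hx with h | rfl
    · exact le_of_lt (by rw [Fin.lt_def]; omega)
    · exact le_rfl

lemma rgf_blk2_mem (hs : s.val < k) {j : Fin n} (hj : j ∈ blk2 k s) :
    rgf (oneBig (blk2 k s) (blk2_nonempty s)) j = s.val + 1 := by
  rw [rgf_oneBig, blockOf_oneBig_mem _ hj, if_pos le_rfl, blk2_min hs]
  have : ((blk2 k s)ᶜ.filter (fun x : Fin n =>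
      ((x : Fin n) : WithTop (Fin n)) ≤ (s : WithTop (Fin n))))
      = Finset.univ.filter (fun x : Fin n => 0 ≤ x.val ∧ x.val < s.val) := by
    ext x
    simp only [Finset.mem_filter, Finset.mem_compl, Finset.mem_univ, true_and,
      WithTop.coe_le_coe, mem_blk2]
    constructor
    · rintro ⟨hnb, hle⟩
      push_neg at hnb
      refine ⟨Nat.zero_le _, ?_⟩
      rw [Fin.le_def] at hle
      have := hnb.2
      rcases Nat.lt_or_ge x.val s.val with h | h
      · exact h
      · exact absurd (Fin.ext (le_antisymm hle h) : x = s) hnb.2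
    · rintro ⟨-, hlt⟩
      refine ⟨?_, by rw [Fin.le_def]; omega⟩
      push_neg
      exact ⟨by omega, fun h => by rw [h] at hlt; omega⟩
  rw [this, card_filter_val_Ico 0 s.val (le_of_lt s.isLt)]
  omega

lemma rgf_blk2_not_mem (hkn : k ≤ n) (hs : s.val < k) {j : Fin n} (hj : j ∉ blk2 k s) :
    rgf (oneBig (blk2 k s) (blk2_nonempty s)) j = j.val + 1 := by
  have hjk : j.val < k ∧ j ≠ s := by
    rw [mem_blk2] at hj
    push_neg at hj
    exact ⟨by omega, hj.2⟩
  rw [rgf_oneBig, blockOf_oneBig_not_mem _ hj, Finset.min_singleton, blk2_min hs]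
  rcases lt_or_gt_of_ne hjk.2 with hjs | hsj
  · -- j < s : the big block doesn't count
    rw [if_neg (by rw [WithTop.coe_le_coe]; exact not_le_of_gt hjs)]
    have : ((blk2 k s)ᶜ.filter (fun x : Fin n =>
        ((x : Fin n) : WithTop (Fin n)) ≤ (j : WithTop (Fin n))))
        = Finset.univ.filter (fun x : Fin n => 0 ≤ x.val ∧ x.val < j.val + 1) := by
      ext x
      simp only [Finset.mem_filter, Finset.mem_compl, Finset.mem_univ, true_and,
        WithTop.coe_le_coe, mem_blk2, Fin.le_def]
      constructor
      · rintro ⟨-, hle⟩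
        exact ⟨Nat.zero_le _, by omega⟩
      · rintro ⟨-, hlt⟩
        have hxj : x.val ≤ j.val := by omega
        refine ⟨?_, hxj⟩
        push_neg
        have hxs : x.val < s.val := by
          rw [Fin.lt_def] at hjs
          omega
        exact ⟨by omega, fun h => by rw [h] at hxs; omega⟩
    rw [this, card_filter_val_Ico 0 (j.val + 1) (by omega)]
    omega
  · -- s < j : the big block counts once
    rw [if_pos (by rw [WithTop.coe_le_coe]; exact le_of_lt hsj)]
    have : ((blk2 k s)ᶜ.filter (fun x : Fin n =>
        ((x : Fin n) : WithTop (Fin n)) ≤ (j : WithTop (Fin n))))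
        = (Finset.univ.filter (fun x : Fin n => 0 ≤ x.val ∧ x.val < j.val + 1)).erase s := by
      ext x
      simp only [Finset.mem_filter, Finset.mem_compl, Finset.mem_univ, true_and,
        WithTop.coe_le_coe, mem_blk2, Finset.mem_erase, Fin.le_def]
      constructor
      · rintro ⟨hnb, hle⟩
        push_neg at hnb
        exact ⟨hnb.2, Nat.zero_le _, by omega⟩
      · rintro ⟨hxs, -, hlt⟩
        refine ⟨?_, by omega⟩
        push_neg
        exact ⟨by omega, hxs⟩
    rw [this, Finset.card_erase_of_mem (by
        simp only [Finset.mem_filter, Finset.mem_univ, true_and]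
        have hsj2 : s.val < j.val := hsj
        exact ⟨Nat.zero_le _, by omega⟩),
      card_filter_val_Ico 0 (j.val + 1) (by omega)]
    omega

lemma rsStat_blk2 (hk : 1 ≤ k) (hkn : k < n) (hs : s.val < k) :
    rsStat (rgf (oneBig (blk2 k s) (blk2_nonempty s))) = k - 1 - s.val := by
  classical
  rw [rsStat]
  have hterm : ∀ j : Fin n,
      (((Finset.univ.filter (fun i => j < i)).image
          (rgf (oneBig (blk2 k s) (blk2_nonempty s)))).filter
        (fun v => v < rgf (oneBig (blk2 k s) (blk2_nonempty s)) j)).card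
      = if s.val < j.val ∧ j.val < k then 1 else 0 := by
    intro j
    by_cases hjb : j ∈ blk2 k s
    · rw [if_neg (by
        rcases mem_blk2.mp hjb with h | rfl
        · rintro ⟨-, h2⟩; omega
        · rintro ⟨h1, -⟩; omega)]
      rw [Finset.card_eq_zero, Finset.filter_eq_empty_iff]
      rintro v hv
      rw [Finset.mem_image] at hv
      obtain ⟨i, hi, rfl⟩ := hv
      rw [Finset.mem_filter] at hi
      have hji : j < i := hi.2
      intro hlt
      rw [rgf_blk2_mem hs hjb] at hlt
      by_cases hib : i ∈ blk2 k s
      · rw [rgf_blk2_mem hs hib] at hlt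
        omega
      · rw [rgf_blk2_not_mem (le_of_lt hkn) hs hib] at hlt
        -- i.val < s.val but j < i and j ∈ blk2
        rcases mem_blk2.mp hjb with h | rfl
        · rw [Fin.lt_def] at hji
          have : i.val < k := by omega
          omega
        · rw [Fin.lt_def] at hji
          omega
    · have hjk : j.val < k ∧ j ≠ s := by
        rw [mem_blk2] at hjb
        push_neg at hjb
        exact ⟨by omega, hjb.2⟩
      rw [rgf_blk2_not_mem (le_of_lt hkn) hs hjb]
      rcases lt_or_gt_of_ne hjk.2 with hjs | hsj
      · rw [if_neg (by rw [Fin.lt_def] at hjs; rintro ⟨h1, -⟩; omega)]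
        rw [Finset.card_eq_zero, Finset.filter_eq_empty_iff]
        rintro v hv
        rw [Finset.mem_image] at hv
        obtain ⟨i, hi, rfl⟩ := hv
        rw [Finset.mem_filter] at hi
        have hji : j < i := hi.2
        intro hlt
        by_cases hib : i ∈ blk2 k s
        · rw [rgf_blk2_mem hs hib] at hlt
          rw [Fin.lt_def] at hjs
          omega
        · rw [rgf_blk2_not_mem (le_of_lt hkn) hs hib] at hlt
          rw [Fin.lt_def] at hji
          omega
      · have hsj2 : s.val < j.val := hsj
        rw [if_pos ⟨hsj2, hjk.1⟩]
        have : (((Finset.univ.filter (fun i => j < i)).image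
            (rgf (oneBig (blk2 k s) (blk2_nonempty s)))).filter
              (fun v => v < j.val + 1)) = {s.val + 1} := by
          ext v
          simp only [Finset.mem_filter, Finset.mem_image, Finset.mem_univ, true_and,
            Finset.mem_singleton]
          constructor
          · rintro ⟨⟨i, hji, rfl⟩, hlt⟩
            by_cases hib : i ∈ blk2 k s
            · rw [rgf_blk2_mem hs hib]
            · rw [rgf_blk2_not_mem (le_of_lt hkn) hs hib] at hlt ⊢
              rw [Fin.lt_def] at hji
              omega
          · rintro rfl
            refine ⟨⟨⟨k, hkn⟩, ?_, ?_⟩, by omega⟩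
            · rw [Fin.lt_def]
              exact hjk.1
            · exact rgf_blk2_mem hs (mem_blk2.mpr (Or.inl le_rfl))
        rw [this, Finset.card_singleton]
  rw [Finset.sum_congr rfl (fun j _ => hterm j), Finset.sum_boole]
  have : (Finset.univ.filter (fun j : Fin n => s.val < j.val ∧ j.val < k))
      = (Finset.univ.filter (fun j : Fin n => s.val + 1 ≤ j.val ∧ j.val < k)) := by
    apply Finset.filter_congr
    intro j _
    constructor
    · rintro ⟨h1, h2⟩; exact ⟨h1, h2⟩
    · rintro ⟨h1, h2⟩; exact ⟨h1, h2⟩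
  rw [this, card_filter_val_Ico (s.val + 1) k (le_of_lt hkn)]
  simp
  omega

end Fam2
section GenPoly
variable {n : ℕ}

lemma genPoly1 {k : ℕ} (hk : 1 ≤ k) (hkn : k < n) :
    genPoly n k avoids1_23 lbStat = ∑ j ∈ Finset.range k, (X : Polynomial ℕ) ^ j := by
  classical
  rw [genPoly]
  have hS : (Finset.univ.filter fun P : SP n => P.parts.card = k ∧ avoids1_23 P)
      = (Finset.univ.filter fun t : Fin n => n - k ≤ t.val).image
          (fun t => oneBig (blk1 k t) (blk1_nonempty t)) := by
    ext P
    simp only [Finset.mem_filter, Finset.mem_image, Finset.mem_univ, true_and]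
    constructor
    · rintro ⟨hcard, hav⟩
      obtain ⟨t, ht, hparts⟩ := classify1 hk hkn hav hcard
      exact ⟨t, ht, (Finpartition.ext hparts).symm⟩
    · rintro ⟨t, ht, rfl⟩
      exact ⟨card_parts_oneBig_blk1 hk (le_of_lt hkn) ht, avoids1_23_oneBig_blk1 hkn ht⟩
  rw [hS, Finset.sum_image (by
    intro t ht t' ht' h
    rw [Finset.mem_coe, Finset.mem_filter] at ht ht'
    have hp : oneBigParts (blk1 k t) = oneBigParts (blk1 k t') := by
      have := congrArg Finpartition.parts h
      rwa [oneBig_parts, oneBig_parts] at this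
    have hmem : blk1 k t ∈ oneBigParts (blk1 k t') := by
      rw [← hp, mem_oneBigParts]; left; rfl
    rcases mem_oneBigParts.mp hmem with heq | ⟨i, -, heq⟩
    · have : t ∈ blk1 k t' := heq ▸ mem_blk1.mpr (Or.inr rfl)
      rcases mem_blk1.mp this with hlt | heq'
      · omega
      · exact heq'
    · have h1 := card_blk1 ht.2
      rw [heq, Finset.card_singleton] at h1
      omega)]
  have hval : ∀ t ∈ (Finset.univ.filter fun t : Fin n => n - k ≤ t.val),
      (X : Polynomial ℕ) ^ (lbStat (rgf (oneBig (blk1 k t) (blk1_nonempty t))))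
        = (X : Polynomial ℕ) ^ (t.val - (n - k)) := by
    intro t ht
    rw [Finset.mem_filter] at ht
    rw [lbStat_blk1 hkn ht.2]
  rw [Finset.sum_congr rfl hval]
  apply Finset.sum_bij (i := fun (t : Fin n) _ => t.val - (n - k))
  · intro t ht
    rw [Finset.mem_filter] at ht
    rw [Finset.mem_range]
    have := t.isLt
    omega
  · intro t ht t' ht' hval
    rw [Finset.mem_filter] at ht ht'
    apply Fin.ext
    omega
  · intro b hb
    rw [Finset.mem_range] at hb
    refine ⟨⟨n - k + b, by omega⟩, Finset.mem_filter.mpr ⟨Finset.mem_univ _, by simp⟩, by simp⟩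
  · intro t ht
    rfl

lemma genPoly2 {k : ℕ} (hk : 1 ≤ k) (hkn : k < n) :
    genPoly n k avoids12_3 rsStat = ∑ j ∈ Finset.range k, (X : Polynomial ℕ) ^ j := by
  classical
  rw [genPoly]
  have hS : (Finset.univ.filter fun P : SP n => P.parts.card = k ∧ avoids12_3 P)
      = (Finset.univ.filter fun s : Fin n => s.val < k).image
          (fun s => oneBig (blk2 k s) (blk2_nonempty s)) := by
    ext P
    simp only [Finset.mem_filter, Finset.mem_image, Finset.mem_univ, true_and]
    constructor
    · rintro ⟨hcard, hav⟩
      obtain ⟨s, hs, hparts⟩ := classify2 hk hkn hav hcard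
      exact ⟨s, hs, (Finpartition.ext hparts).symm⟩
    · rintro ⟨s, hs, rfl⟩
      exact ⟨card_parts_oneBig_blk2 hk (le_of_lt hkn) hs, avoids12_3_oneBig_blk2 hk hs⟩
  rw [hS, Finset.sum_image (by
    intro s hs s' hs' h
    rw [Finset.mem_coe, Finset.mem_filter] at hs hs'
    have hp : oneBigParts (blk2 k s) = oneBigParts (blk2 k s') := by
      have := congrArg Finpartition.parts h
      rwa [oneBig_parts, oneBig_parts] at this
    have hmem : blk2 k s ∈ oneBigParts (blk2 k s') := by
      rw [← hp, mem_oneBigParts]; left; rfl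
    rcases mem_oneBigParts.mp hmem with heq | ⟨i, -, heq⟩
    · have : s ∈ blk2 k s' := heq ▸ mem_blk2.mpr (Or.inr rfl)
      rcases mem_blk2.mp this with hlt | heq'
      · omega
      · exact heq'
    · have h1 := card_blk2 (le_of_lt hkn) hs.2
      rw [heq, Finset.card_singleton] at h1
      omega)]
  have hval : ∀ s ∈ (Finset.univ.filter fun s : Fin n => s.val < k),
      (X : Polynomial ℕ) ^ (rsStat (rgf (oneBig (blk2 k s) (blk2_nonempty s))))
        = (X : Polynomial ℕ) ^ (k - 1 - s.val) := by
    intro s hs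
    rw [Finset.mem_filter] at hs
    rw [rsStat_blk2 hk hkn hs.2]
  rw [Finset.sum_congr rfl hval]
  apply Finset.sum_bij (i := fun (s : Fin n) _ => k - 1 - s.val)
  · intro s hs
    rw [Finset.mem_filter] at hs
    rw [Finset.mem_range]
    omega
  · intro s hs s' hs' hval
    rw [Finset.mem_filter] at hs hs'
    apply Fin.ext
    omega
  · intro b hb
    rw [Finset.mem_range] at hb
    refine ⟨⟨k - 1 - b, by omega⟩, Finset.mem_filter.mpr ⟨Finset.mem_univ _, by simp; omega⟩,
      by simp; omega⟩
  · intro s hs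
    rfl

end GenPoly
section Diag
variable {n : ℕ}

lemma all_singleton_of_card_parts {P : SP n} (hc : P.parts.card = n) :
    ∀ C ∈ P.parts, C.card = 1 := by
  intro C hC
  by_contra h
  have h2 : 2 ≤ C.card := by
    have := Finset.card_pos.mpr (P.nonempty_of_mem_parts hC)
    omega
  have hsum : ∑ D ∈ P.parts, D.card = n := by
    rw [P.sum_card_parts]
    simp
  have hrest : (P.parts.erase C).card • 1 ≤ ∑ D ∈ P.parts.erase C, D.card :=
    Finset.card_nsmul_le_sum _ _ _ (fun D hD =>
      Finset.card_pos.mpr (P.nonempty_of_mem_parts (Finset.mem_of_mem_erase hD)))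
  have hadd : C.card + ∑ D ∈ P.parts.erase C, D.card = ∑ D ∈ P.parts, D.card :=
    Finset.add_sum_erase _ _ hC
  have hce : (P.parts.erase C).card = n - 1 := by
    rw [Finset.card_erase_of_mem hC, hc]
  simp only [smul_eq_mul, mul_one] at hrest
  have hn1 : 1 ≤ n := by omega
  omega

lemma classify_diag (hn : 0 < n) {P : SP n} (hc : P.parts.card = n) :
    P = oneBig {(⟨0, hn⟩ : Fin n)} (Finset.singleton_nonempty _) := by
  have hsing := all_singleton_of_card_parts hc
  have hB : ({(⟨0, hn⟩ : Fin n)} : Finset (Fin n)) ∈ P.parts := by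
    have hb := blockOf_mem_parts P ⟨0, hn⟩
    have hm := mem_blockOf P ⟨0, hn⟩
    obtain ⟨c, hc'⟩ := Finset.card_eq_one.mp (hsing _ hb)
    rw [hc'] at hm hb
    rw [Finset.mem_singleton] at hm
    rwa [← hm] at hb
  apply Finpartition.ext
  rw [oneBig_parts]
  exact parts_eq_oneBigParts hB (fun C hC _ => hsing C hC)

lemma rgf_diag_lt (hn : 0 < n) {i j : Fin n} (hij : i < j) :
    rgf (oneBig {(⟨0, hn⟩ : Fin n)} (Finset.singleton_nonempty _)) i
      < rgf (oneBig {(⟨0, hn⟩ : Fin n)} (Finset.singleton_nonempty _)) j := by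
  set z : Fin n := ⟨0, hn⟩ with hz
  have hblock : ∀ x : Fin n, blockOf (oneBig {z} (Finset.singleton_nonempty _)) x = {x} := by
    intro x
    by_cases hx : x ∈ ({z} : Finset (Fin n))
    · rw [Finset.mem_singleton] at hx
      subst hx
      exact blockOf_oneBig_mem _ (Finset.mem_singleton_self _)
    · exact blockOf_oneBig_not_mem _ hx
  have hzle : ∀ x : Fin n, z ≤ x := fun x => by
    rw [Fin.le_def]
    exact Nat.zero_le _
  have hform : ∀ x : Fin n, rgf (oneBig {z} (Finset.singleton_nonempty _)) x =
      1 + (({z} : Finset (Fin n))ᶜ.filter (fun y : Fin n => y ≤ x)).card := by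
    intro x
    rw [rgf_oneBig, hblock x, Finset.min_singleton, Finset.min_singleton,
      if_pos (WithTop.coe_le_coe.mpr (hzle x))]
    have : (({z} : Finset (Fin n))ᶜ.filter (fun y : Fin n =>
        ((y : Fin n) : WithTop (Fin n)) ≤ ((x : Fin n) : WithTop (Fin n))))
        = (({z} : Finset (Fin n))ᶜ.filter (fun y : Fin n => y ≤ x)) := by
      apply Finset.filter_congr
      intro y _
      exact WithTop.coe_le_coe
    rw [this]
  rw [hform i, hform j]
  have hsub : (({z} : Finset (Fin n))ᶜ.filter (fun y : Fin n => y ≤ i)) ⊂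
      (({z} : Finset (Fin n))ᶜ.filter (fun y : Fin n => y ≤ j)) := by
    constructor
    · intro x hx
      rw [Finset.mem_filter] at hx ⊢
      exact ⟨hx.1, le_trans hx.2 (le_of_lt hij)⟩
    · intro hsub'
      have hj : j ∈ ({z} : Finset (Fin n))ᶜ.filter (fun y : Fin n => y ≤ j) := by
        rw [Finset.mem_filter, Finset.mem_compl, Finset.mem_singleton]
        refine ⟨fun h => ?_, le_rfl⟩
        rw [h] at hij
        exact absurd (lt_of_le_of_lt (hzle i) hij) (lt_irrefl _)
      have := hsub' hj
      rw [Finset.mem_filter] at this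
      exact absurd (lt_of_lt_of_le hij this.2) (lt_irrefl i)
  have := Finset.card_lt_card hsub
  omega

lemma lbStat_of_strictMono {w : Fin n → ℕ} (h : ∀ i j : Fin n, i < j → w i < w j) :
    lbStat w = 0 := by
  rw [lbStat]
  apply Finset.sum_eq_zero
  intro j _
  rw [Finset.card_eq_zero, Finset.filter_eq_empty_iff]
  rintro v hv
  rw [Finset.mem_image] at hv
  obtain ⟨i, hi, rfl⟩ := hv
  rw [Finset.mem_filter] at hi
  exact not_lt_of_gt (h i j hi.2)

lemma rsStat_of_strictMono {w : Fin n → ℕ} (h : ∀ i j : Fin n, i < j → w i < w j) :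
    rsStat w = 0 := by
  rw [rsStat]
  apply Finset.sum_eq_zero
  intro j _
  rw [Finset.card_eq_zero, Finset.filter_eq_empty_iff]
  rintro v hv
  rw [Finset.mem_image] at hv
  obtain ⟨i, hi, rfl⟩ := hv
  rw [Finset.mem_filter] at hi
  exact not_lt_of_gt (h j i hi.2)

lemma avoids1_23_diag (hn : 0 < n) :
    avoids1_23 (oneBig {(⟨0, hn⟩ : Fin n)} (Finset.singleton_nonempty _)) := by
  rintro ⟨a, b, c, hab, hbc, hsame, -⟩
  rw [inSameBlock_oneBig] at hsame
  rcases hsame with ⟨hb, hc⟩ | rfl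
  · rw [Finset.mem_singleton] at hb hc
    rw [hb, hc] at hbc
    exact absurd hbc (lt_irrefl _)
  · exact absurd hbc (lt_irrefl _)

lemma avoids12_3_diag (hn : 0 < n) :
    avoids12_3 (oneBig {(⟨0, hn⟩ : Fin n)} (Finset.singleton_nonempty _)) := by
  rintro ⟨a, b, c, hab, hbc, hsame, -⟩
  rw [inSameBlock_oneBig] at hsame
  rcases hsame with ⟨ha, hb⟩ | rfl
  · rw [Finset.mem_singleton] at ha hb
    rw [ha, hb] at hab
    exact absurd hab (lt_irrefl _)
  · exact absurd hab (lt_irrefl _)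

lemma genPoly_diag (hn : 0 < n) (avoid : SP n → Prop)
    (stat : (Fin n → ℕ) → ℕ)
    (hav : avoid (oneBig {(⟨0, hn⟩ : Fin n)} (Finset.singleton_nonempty _)))
    (hstat : stat (rgf (oneBig {(⟨0, hn⟩ : Fin n)} (Finset.singleton_nonempty _))) = 0) :
    genPoly n n avoid stat = 1 := by
  classical
  rw [genPoly]
  have hS : (Finset.univ.filter fun P : SP n => P.parts.card = n ∧ avoid P)
      = {oneBig {(⟨0, hn⟩ : Fin n)} (Finset.singleton_nonempty _)} := by
    ext P
    simp only [Finset.mem_filter, Finset.mem_univ, true_and, Finset.mem_singleton]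
    constructor
    · rintro ⟨hcard, -⟩
      exact classify_diag hn hcard
    · rintro rfl
      refine ⟨?_, hav⟩
      rw [oneBig_parts, card_oneBigParts _ (Finset.singleton_nonempty _),
        Finset.card_singleton]
      omega
  rw [hS, Finset.sum_singleton, hstat, pow_zero]

end Diag
/-- For `n ≥ k ≥ 1`, `LB_{n,k}(1/23, q) = RS_{n,k}(12/3, q)`, both being
`Σ_{j=1}^{k} q^{j-1}` when `n > k` and `1` when `n = k`. -/
theorem stmt14 (n k : ℕ) (hk : 1 ≤ k) (hkn : k ≤ n) :
    genPoly n k avoids1_23 lbStat = genPoly n k avoids12_3 rsStat ∧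
    (k < n → genPoly n k avoids1_23 lbStat = ∑ j ∈ Finset.range k, (X : Polynomial ℕ) ^ j) ∧
    (k = n → genPoly n k avoids1_23 lbStat = 1) := by
  rcases lt_or_eq_of_le hkn with hlt | heq
  · exact ⟨(genPoly1 hk hlt).trans (genPoly2 hk hlt).symm,
      fun _ => genPoly1 hk hlt, fun heq' => absurd heq' (by omega)⟩
  · subst heq
    have hn : 0 < k := hk
    have h1 := genPoly_diag hn avoids1_23 lbStat (avoids1_23_diag hn)
      (lbStat_of_strictMono (fun i j h => rgf_diag_lt hn h))
    have h2 := genPoly_diag hn avoids12_3 rsStat (avoids12_3_diag hn)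
      (rsStat_of_strictMono (fun i j h => rgf_diag_lt hn h))
    exact ⟨h1.trans h2.symm, fun h => absurd h (lt_irrefl k), fun _ => h1⟩
end

section
/- For all n ≥ k ≥ 1, LS_{n,k}(1/23, r) = RB_{n,k}(12/3, r) as polynomials, where both equal k·r^{C(k,2)} when n > k and r^{C(k,2)} when n = k. -/
open Finset Polynomial

namespace Stmt15

variable {n : ℕ}

lemma blockOf_eq_part (P : SP n) (i : Fin n) : blockOf P i = P.part i := by
  have h : P.parts.filter (fun B => i ∈ B) = {P.part i} := by
    ext B
    simp only [Finset.mem_filter, Finset.mem_singleton]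
    constructor
    · rintro ⟨hB, hiB⟩
      exact (P.part_eq_of_mem hB hiB).symm
    · rintro rfl
      exact ⟨P.part_mem.2 (Finset.mem_univ i), P.mem_part (Finset.mem_univ i)⟩
  rw [blockOf, h, Finset.sup_singleton]
  rfl

lemma part_nonempty (P : SP n) (i : Fin n) : (P.part i).Nonempty :=
  P.nonempty_of_mem_parts (P.part_mem.2 (Finset.mem_univ i))

lemma inSameBlock_iff {P : SP n} {i j : Fin n} :
    inSameBlock P i j ↔ P.part i = P.part j := by
  constructor
  · rintro ⟨B, hB, hi, hj⟩
    rw [P.part_eq_of_mem hB hi, P.part_eq_of_mem hB hj]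
  · intro h
    exact ⟨P.part i, P.part_mem.2 (Finset.mem_univ i), P.mem_part (Finset.mem_univ i),
      h ▸ P.mem_part (Finset.mem_univ j)⟩

/-- The rank of a block: number of blocks with min ≤ its min. -/
def rk (P : SP n) (B : Finset (Fin n)) : ℕ :=
  (P.parts.filter (fun C => C.min ≤ B.min)).card

lemma rgf_eq_rk (P : SP n) (i : Fin n) : rgf P i = rk P (P.part i) := by
  rw [rgf, blockOf_eq_part, rk]

lemma min_injOn {P : SP n} {B C : Finset (Fin n)} (hB : B ∈ P.parts) (hC : C ∈ P.parts)
    (h : B.min = C.min) : B = C := by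
  obtain ⟨b, hb⟩ := P.nonempty_of_mem_parts hB
  have hBmin : B.min = (B.min' ⟨b, hb⟩ : Fin n) := (Finset.coe_min' _).symm
  have h1 : B.min' ⟨b, hb⟩ ∈ B := Finset.min'_mem _ _
  have h2 : B.min' ⟨b, hb⟩ ∈ C := Finset.mem_of_min (by rw [← h, hBmin])
  exact P.eq_of_mem_parts hB hC h1 h2

lemma rk_lt_rk {P : SP n} {B C : Finset (Fin n)} (hB : B ∈ P.parts) (hC : C ∈ P.parts) :
    rk P B < rk P C ↔ B.min < C.min := by
  constructor
  · intro h
    by_contra hlt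
    push_neg at hlt
    have : P.parts.filter (fun D => D.min ≤ C.min) ⊆ P.parts.filter (fun D => D.min ≤ B.min) := by
      intro D hD
      simp only [Finset.mem_filter] at hD ⊢
      exact ⟨hD.1, le_trans hD.2 hlt⟩
    have := Finset.card_le_card this
    simp only [rk] at h
    omega
  · intro h
    apply Finset.card_lt_card
    constructor
    · intro D hD
      simp only [Finset.mem_filter] at hD ⊢
      exact ⟨hD.1, le_trans hD.2 h.le⟩
    · intro hsub
      have hCmem : C ∈ P.parts.filter (fun D => D.min ≤ C.min) :=
        Finset.mem_filter.2 ⟨hC, le_refl _⟩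
      have := hsub hCmem
      simp only [Finset.mem_filter] at this
      exact absurd this.2 (not_le.2 h)

lemma rk_inj {P : SP n} {B C : Finset (Fin n)} (hB : B ∈ P.parts) (hC : C ∈ P.parts)
    (h : rk P B = rk P C) : B = C := by
  apply min_injOn hB hC
  by_contra hne
  rcases lt_or_gt_of_ne hne with hlt | hlt
  · exact absurd ((rk_lt_rk hB hC).2 hlt) (by omega)
  · exact absurd ((rk_lt_rk hC hB).2 hlt) (by omega)

lemma one_le_rk {P : SP n} {B : Finset (Fin n)} (hB : B ∈ P.parts) : 1 ≤ rk P B := by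
  rw [rk, Nat.one_le_iff_ne_zero, ← Nat.pos_iff_ne_zero, Finset.card_pos]
  exact ⟨B, Finset.mem_filter.2 ⟨hB, le_refl _⟩⟩

lemma rk_le_card {P : SP n} (B : Finset (Fin n)) : rk P B ≤ P.parts.card :=
  Finset.card_le_card (Finset.filter_subset _ _)

lemma rk_image (P : SP n) : P.parts.image (rk P) = Finset.Icc 1 P.parts.card := by
  apply Finset.eq_of_subset_of_card_le
  · intro v hv
    simp only [Finset.mem_image] at hv
    obtain ⟨B, hB, rfl⟩ := hv
    exact Finset.mem_Icc.2 ⟨one_le_rk hB, rk_le_card B⟩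
  · rw [Nat.card_Icc]
    rw [Finset.card_image_of_injOn (fun B hB C hC h => rk_inj hB hC h)]
    omega

lemma exists_rk {P : SP n} {v : ℕ} (h1 : 1 ≤ v) (h2 : v ≤ P.parts.card) :
    ∃ B ∈ P.parts, rk P B = v := by
  have : v ∈ P.parts.image (rk P) := by
    rw [rk_image]; exact Finset.mem_Icc.2 ⟨h1, h2⟩
  simpa [Finset.mem_image] using this

/-- min of the block of j -/
def mn (P : SP n) (j : Fin n) : Fin n := (P.part j).min' (part_nonempty P j)

lemma mn_mem (P : SP n) (j : Fin n) : mn P j ∈ P.part j := Finset.min'_mem _ _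

lemma mn_le (P : SP n) (j : Fin n) : mn P j ≤ j :=
  Finset.min'_le _ _ (P.mem_part (Finset.mem_univ j))

lemma part_mn (P : SP n) (j : Fin n) : P.part (mn P j) = P.part j :=
  P.part_eq_of_mem (P.part_mem.2 (Finset.mem_univ j)) (mn_mem P j)

lemma part_min_eq (P : SP n) (j : Fin n) : (P.part j).min = (mn P j : Fin n) :=
  (Finset.coe_min' _).symm

lemma min_lt_min_iff {P : SP n} (i j : Fin n) :
    (P.part i).min < (P.part j).min ↔ mn P i < mn P j := by
  rw [part_min_eq, part_min_eq]
  exact WithTop.coe_lt_coe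

end Stmt15
namespace Stmt15

variable {n : ℕ}

lemma one_le_rgf (P : SP n) (i : Fin n) : 1 ≤ rgf P i := by
  rw [rgf_eq_rk]; exact one_le_rk (P.part_mem.2 (Finset.mem_univ i))

lemma rgf_le (P : SP n) (i : Fin n) : rgf P i ≤ P.parts.card := by
  rw [rgf_eq_rk]; exact rk_le_card _

lemma rgf_lt_iff (P : SP n) (i j : Fin n) : rgf P i < rgf P j ↔ mn P i < mn P j := by
  rw [rgf_eq_rk, rgf_eq_rk,
    rk_lt_rk (P.part_mem.2 (Finset.mem_univ i)) (P.part_mem.2 (Finset.mem_univ j)),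
    min_lt_min_iff]

lemma rgf_eq_iff (P : SP n) (i j : Fin n) : rgf P i = rgf P j ↔ P.part i = P.part j := by
  constructor
  · intro h
    exact rk_inj (P.part_mem.2 (Finset.mem_univ i)) (P.part_mem.2 (Finset.mem_univ j))
      (by rwa [rgf_eq_rk, rgf_eq_rk] at h)
  · intro h
    rw [rgf_eq_rk, rgf_eq_rk, h]

lemma mn_min' {P : SP n} {B : Finset (Fin n)} (hB : B ∈ P.parts)
    (hne : B.Nonempty) : mn P (B.min' hne) = B.min' hne := by
  have hpart : P.part (B.min' hne) = B := P.part_eq_of_mem hB (Finset.min'_mem _ _)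
  simp only [mn]
  congr 1

lemma rgf_min' {P : SP n} {B : Finset (Fin n)} (hB : B ∈ P.parts) (hne : B.Nonempty) :
    rgf P (B.min' hne) = rk P B := by
  rw [rgf_eq_rk, P.part_eq_of_mem hB (Finset.min'_mem _ _)]

lemma prefix_image {P : SP n} {j : Fin n} (hj : mn P j = j) :
    (Finset.univ.filter (fun i => i < j)).image (rgf P) = Finset.Ico 1 (rgf P j) := by
  ext v
  simp only [Finset.mem_image, Finset.mem_filter, Finset.mem_univ, true_and, Finset.mem_Ico]
  constructor
  · rintro ⟨i, hij, rfl⟩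
    refine ⟨one_le_rgf P i, ?_⟩
    rw [rgf_lt_iff, hj]
    exact lt_of_le_of_lt (mn_le P i) hij
  · rintro ⟨h1, h2⟩
    obtain ⟨B, hB, hrk⟩ := exists_rk h1 (le_trans (le_of_lt h2) (rgf_le P j))
    have hne : B.Nonempty := P.nonempty_of_mem_parts hB
    refine ⟨B.min' hne, ?_, by rw [rgf_min' hB hne, hrk]⟩
    have : rgf P (B.min' hne) < rgf P j := by rw [rgf_min' hB hne, hrk]; exact h2
    rw [rgf_lt_iff, hj, mn_min' hB hne] at this
    exact this

lemma suffix_filter {P : SP n} {j : Fin n} (hj : mn P j = j) :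
    (((Finset.univ.filter (fun i => j < i)).image (rgf P)).filter (fun v => rgf P j < v)) =
      Finset.Ioc (rgf P j) P.parts.card := by
  ext v
  simp only [Finset.mem_filter, Finset.mem_image, Finset.mem_univ, true_and, Finset.mem_Ioc]
  constructor
  · rintro ⟨⟨i, hij, rfl⟩, h2⟩
    exact ⟨h2, rgf_le P i⟩
  · rintro ⟨h1, h2⟩
    obtain ⟨B, hB, hrk⟩ := exists_rk (le_trans (one_le_rgf P j) (le_of_lt h1)) h2
    have hne : B.Nonempty := P.nonempty_of_mem_parts hB
    refine ⟨⟨B.min' hne, ?_, by rw [rgf_min' hB hne, hrk]⟩, h1⟩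
    have : rgf P j < rgf P (B.min' hne) := by rw [rgf_min' hB hne, hrk]; exact h1
    rw [rgf_lt_iff, hj, mn_min' hB hne] at this
    exact this

lemma nonmin_rgf_one {P : SP n} (h : avoids1_23 P) {j : Fin n} (hj : mn P j ≠ j) :
    rgf P j = 1 := by
  have haj : mn P j < j := lt_of_le_of_ne (mn_le P j) hj
  have hkey : ∀ C ∈ P.parts, (P.part j).min ≤ C.min := by
    intro C hC
    by_contra hlt
    push_neg at hlt
    have hne : C.Nonempty := P.nonempty_of_mem_parts hC
    set c := C.min' hne with hc
    have hcmin : C.min = (c : Fin n) := (Finset.coe_min' _).symm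
    have hca : c < mn P j := by
      have := hlt
      rw [hcmin, part_min_eq] at this
      exact WithTop.coe_lt_coe.1 this
    apply h
    refine ⟨c, mn P j, j, hca, haj, ?_, ?_⟩
    · exact ⟨P.part j, P.part_mem.2 (Finset.mem_univ j), mn_mem P j,
        P.mem_part (Finset.mem_univ j)⟩
    · rintro hsb
      rw [inSameBlock_iff] at hsb
      have hcC : P.part c = C := P.part_eq_of_mem hC (Finset.min'_mem _ _)
      rw [hcC, part_mn] at hsb
      have hcmem : c ∈ P.part j := hsb ▸ Finset.min'_mem C hne
      exact absurd hca (not_lt.2 (Finset.min'_le _ _ hcmem))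
  -- now rk (part j) = 1
  rw [rgf_eq_rk]
  have : P.parts.filter (fun C => C.min ≤ (P.part j).min) = {P.part j} := by
    apply Finset.eq_singleton_iff_unique_mem.2
    refine ⟨Finset.mem_filter.2 ⟨P.part_mem.2 (Finset.mem_univ j), le_refl _⟩, ?_⟩
    intro C hC
    rw [Finset.mem_filter] at hC
    exact min_injOn hC.1 (P.part_mem.2 (Finset.mem_univ j))
      (le_antisymm hC.2 (hkey C hC.1))
  simp only [rk]
  rw [this, Finset.card_singleton]

lemma nonmin_suffix {P : SP n} (h : avoids12_3 P) {j : Fin n} (hj : mn P j ≠ j)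
    {i : Fin n} (hij : j < i) : P.part i = P.part j := by
  have haj : mn P j < j := lt_of_le_of_ne (mn_le P j) hj
  have hsb : inSameBlock P (mn P j) j :=
    ⟨P.part j, P.part_mem.2 (Finset.mem_univ j), mn_mem P j, P.mem_part (Finset.mem_univ j)⟩
  by_contra hne
  apply h
  refine ⟨mn P j, j, i, haj, hij, hsb, ?_⟩
  rintro hsb2
  rw [inSameBlock_iff] at hsb2
  rw [inSameBlock_iff] at hsb
  exact hne (by rw [← hsb2, hsb])

lemma minSet_injOn (P : SP n) : Set.InjOn (rgf P)
    (Finset.univ.filter (fun j => mn P j = j)) := by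
  intro a ha b hb hab
  simp only [Finset.coe_filter, Set.mem_setOf_eq] at ha hb
  rw [rgf_eq_iff] at hab
  have : mn P a = mn P b := by simp only [mn]; congr 1
  rw [ha.2, hb.2] at this
  exact this

lemma minSet_image (P : SP n) :
    (Finset.univ.filter (fun j => mn P j = j)).image (rgf P) =
      Finset.Icc 1 P.parts.card := by
  ext v
  simp only [Finset.mem_image, Finset.mem_filter, Finset.mem_univ, true_and, Finset.mem_Icc]
  constructor
  · rintro ⟨i, _, rfl⟩
    exact ⟨one_le_rgf P i, rgf_le P i⟩
  · rintro ⟨h1, h2⟩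
    obtain ⟨B, hB, hrk⟩ := exists_rk h1 h2
    have hne : B.Nonempty := P.nonempty_of_mem_parts hB
    exact ⟨B.min' hne, mn_min' hB hne, by rw [rgf_min' hB hne, hrk]⟩

lemma sum_Icc_sub_one : ∀ k : ℕ, ∑ v ∈ Finset.Icc 1 k, (v - 1) = k.choose 2 := by
  intro k
  induction k with
  | zero => simp
  | succ k ih =>
    rw [Finset.sum_Icc_succ_top (by omega)]
    have : (k + 1).choose 2 = k.choose 1 + k.choose 2 := Nat.choose_succ_succ k 1
    rw [Nat.choose_one_right] at this
    omega

lemma sum_Icc_rev (k : ℕ) : ∑ v ∈ Finset.Icc 1 k, (k - v) = k.choose 2 := by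
  rw [← sum_Icc_sub_one k]
  apply Finset.sum_nbij' (fun v => k + 1 - v) (fun v => k + 1 - v) <;>
    intros <;> simp_all [Finset.mem_Icc] <;> omega

theorem lsStat_eq {P : SP n} (h : avoids1_23 P) :
    lsStat (rgf P) = (P.parts.card).choose 2 := by
  rw [lsStat, ← Finset.sum_filter_add_sum_filter_not Finset.univ (fun j => mn P j = j)]
  have h2 : ∑ j ∈ Finset.univ.filter (fun j => ¬ mn P j = j),
      (((Finset.univ.filter (fun i => i < j)).image (rgf P)).filter
        (fun v => v < rgf P j)).card = 0 := by
    refine Finset.sum_eq_zero fun j hj => ?_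
    simp only [Finset.mem_filter, Finset.mem_univ, true_and] at hj
    rw [Finset.card_eq_zero, Finset.filter_eq_empty_iff]
    intro v hv
    obtain ⟨i, -, rfl⟩ := Finset.mem_image.1 hv
    have h1 := one_le_rgf P i
    have h2 := nonmin_rgf_one h hj
    omega
  rw [h2, Nat.add_zero]
  have h3 : ∀ j ∈ Finset.univ.filter (fun j => mn P j = j),
      (((Finset.univ.filter (fun i => i < j)).image (rgf P)).filter
        (fun v => v < rgf P j)).card = rgf P j - 1 := by
    intro j hj
    simp only [Finset.mem_filter, Finset.mem_univ, true_and] at hj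
    rw [prefix_image hj, Finset.filter_true_of_mem (fun v hv => (Finset.mem_Ico.1 hv).2),
      Nat.card_Ico]
  rw [Finset.sum_congr rfl h3, ← Finset.sum_image (fun a ha b hb hab =>
    minSet_injOn P (by simpa using ha) (by simpa using hb) hab) (f := fun v => v - 1),
    minSet_image, sum_Icc_sub_one]

theorem rbStat_eq {P : SP n} (h : avoids12_3 P) :
    rbStat (rgf P) = (P.parts.card).choose 2 := by
  rw [rbStat, ← Finset.sum_filter_add_sum_filter_not Finset.univ (fun j => mn P j = j)]
  have h2 : ∑ j ∈ Finset.univ.filter (fun j => ¬ mn P j = j),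
      (((Finset.univ.filter (fun i => j < i)).image (rgf P)).filter
        (fun v => rgf P j < v)).card = 0 := by
    refine Finset.sum_eq_zero fun j hj => ?_
    simp only [Finset.mem_filter, Finset.mem_univ, true_and] at hj
    rw [Finset.card_eq_zero, Finset.filter_eq_empty_iff]
    intro v hv
    obtain ⟨i, hi, rfl⟩ := Finset.mem_image.1 hv
    simp only [Finset.mem_filter, Finset.mem_univ, true_and] at hi
    have : rgf P i = rgf P j := (rgf_eq_iff P i j).2 (nonmin_suffix h hj hi)
    omega
  rw [h2, Nat.add_zero]
  have h3 : ∀ j ∈ Finset.univ.filter (fun j => mn P j = j),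
      (((Finset.univ.filter (fun i => j < i)).image (rgf P)).filter
        (fun v => rgf P j < v)).card = P.parts.card - rgf P j := by
    intro j hj
    simp only [Finset.mem_filter, Finset.mem_univ, true_and] at hj
    rw [suffix_filter hj, Nat.card_Ioc]
  rw [Finset.sum_congr rfl h3, ← Finset.sum_image (fun a ha b hb hab =>
    minSet_injOn P (by simpa using ha) (by simpa using hb) hab)
    (f := fun v => P.parts.card - v), minSet_image, sum_Icc_rev]

end Stmt15
namespace Stmt15

variable {n : ℕ}

/-- The partition whose only possibly-non-singleton block is `B`. -/
def blockPartition (B : Finset (Fin n)) (hB : B.Nonempty) : SP n where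
  parts := insert B ((Finset.univ \ B).image fun i => {i})
  supIndep := by
    rw [Finset.supIndep_iff_pairwiseDisjoint]
    intro x hx y hy hxy
    simp only [Finset.coe_insert, Set.mem_insert_iff, Finset.coe_image, Set.mem_image,
      Finset.mem_coe, Finset.mem_sdiff, Finset.mem_univ, true_and] at hx hy
    rcases hx with rfl | ⟨i, hi, rfl⟩
    · rcases hy with rfl | ⟨j, hj, rfl⟩
      · exact absurd rfl hxy
      · exact Finset.disjoint_singleton_right.2 hj
    · rcases hy with rfl | ⟨j, hj, rfl⟩
      · exact Finset.disjoint_singleton_left.2 hi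
      · exact Finset.disjoint_singleton.2 fun h => hxy (by rw [h])
  sup_parts := by
    refine le_antisymm (Finset.sup_le fun C _ => Finset.subset_univ C) ?_
    intro x _
    rw [Finset.mem_sup]
    by_cases hx : x ∈ B
    · exact ⟨B, Finset.mem_insert_self _ _, hx⟩
    · exact ⟨{x}, Finset.mem_insert_of_mem (Finset.mem_image_of_mem _
        (Finset.mem_sdiff.2 ⟨Finset.mem_univ x, hx⟩)), Finset.mem_singleton_self x⟩
  bot_notMem := by
    simp only [Finset.bot_eq_empty, Finset.mem_insert, Finset.mem_image, Finset.mem_sdiff,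
      Finset.mem_univ, true_and]
    rintro (h | ⟨i, -, h⟩)
    · exact hB.ne_empty h.symm
    · exact Finset.singleton_ne_empty i h

lemma mem_blockPartition {B : Finset (Fin n)} {hB : B.Nonempty} {C : Finset (Fin n)} :
    C ∈ (blockPartition B hB).parts ↔ C = B ∨ ∃ i, i ∉ B ∧ C = {i} := by
  show C ∈ insert B _ ↔ _
  simp only [Finset.mem_insert, Finset.mem_image, Finset.mem_sdiff, Finset.mem_univ, true_and]
  constructor
  · rintro (rfl | ⟨i, hi, rfl⟩)
    · exact Or.inl rfl
    · exact Or.inr ⟨i, hi, rfl⟩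
  · rintro (rfl | ⟨i, hi, rfl⟩)
    · exact Or.inl rfl
    · exact Or.inr ⟨i, hi, rfl⟩

lemma card_parts_blockPartition (B : Finset (Fin n)) (hB : B.Nonempty) :
    (blockPartition B hB).parts.card = 1 + (n - B.card) := by
  have hBnot : B ∉ (Finset.univ \ B).image (fun i => ({i} : Finset (Fin n))) := by
    rw [Finset.mem_image]
    rintro ⟨i, hi, hBi⟩
    rw [Finset.mem_sdiff] at hi
    exact hi.2 (hBi ▸ Finset.mem_singleton_self i)
  have hparts : (blockPartition B hB).parts
      = insert B ((Finset.univ \ B).image fun i => ({i} : Finset (Fin n))) := rfl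
  rw [hparts, Finset.card_insert_of_notMem hBnot,
    Finset.card_image_of_injective _ Finset.singleton_injective,
    Finset.card_sdiff_of_subset (Finset.subset_univ B), Finset.card_univ, Fintype.card_fin]
  omega

lemma eq_blockPartition (P : SP n) {B : Finset (Fin n)} (hB : B ∈ P.parts)
    (hsing : ∀ C ∈ P.parts, C ≠ B → ∃ i, C = {i}) :
    P = blockPartition B (P.nonempty_of_mem_parts hB) := by
  apply Finpartition.ext
  ext C
  rw [mem_blockPartition]
  constructor
  · intro hC
    by_cases hCB : C = B
    · exact Or.inl hCB
    · obtain ⟨i, rfl⟩ := hsing C hC hCB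
      refine Or.inr ⟨i, ?_, rfl⟩
      intro hiB
      exact hCB (P.eq_of_mem_parts hC hB (Finset.mem_singleton_self i) hiB)
  · rintro (rfl | ⟨i, hi, rfl⟩)
    · exact hB
    · have hpi : P.part i ∈ P.parts := P.part_mem.2 (Finset.mem_univ i)
      have hne : P.part i ≠ B := by
        intro h
        exact hi (h ▸ P.mem_part (Finset.mem_univ i))
      obtain ⟨x, hx⟩ := hsing _ hpi hne
      have hmem : i ∈ P.part i := P.mem_part (Finset.mem_univ i)
      rw [hx, Finset.mem_singleton] at hmem
      subst hmem
      exact hx ▸ hpi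

lemma inSameBlock_bot {i j : Fin n} (h : inSameBlock (⊥ : SP n) i j) : i = j := by
  obtain ⟨C, hC, hi, hj⟩ := h
  rw [Finpartition.mem_bot_iff] at hC
  obtain ⟨a, -, rfl⟩ := hC
  rw [Finset.mem_singleton] at hi hj
  rw [hi, hj]

lemma avoids1_23_bot : avoids1_23 (⊥ : SP n) := by
  rintro ⟨a, b, c, _, hbc, hsb, -⟩
  exact absurd (inSameBlock_bot hsb) (ne_of_lt hbc)

lemma avoids12_3_bot : avoids12_3 (⊥ : SP n) := by
  rintro ⟨a, b, c, hab, _, hsb, -⟩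
  exact absurd (inSameBlock_bot hsb) (ne_of_lt hab)

lemma card_parts_bot : (⊥ : SP n).parts.card = n := by
  rw [Finpartition.card_bot, Finset.card_univ, Fintype.card_fin]

lemma eq_bot_of_card {P : SP n} (h : P.parts.card = n) : P = ⊥ := by
  have hsum : ∑ C ∈ P.parts, C.card = n := by
    rw [P.sum_card_parts, Finset.card_univ, Fintype.card_fin]
  have hone : ∀ C ∈ P.parts, C.card = 1 := by
    by_contra hcon
    push_neg at hcon
    obtain ⟨C₀, hC₀, hC₀1⟩ := hcon
    have hlt : ∑ C ∈ P.parts, 1 < ∑ C ∈ P.parts, C.card := by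
      apply Finset.sum_lt_sum
      · intro C hC
        exact Finset.card_pos.2 (P.nonempty_of_mem_parts hC)
      · refine ⟨C₀, hC₀, ?_⟩
        have := Finset.card_pos.2 (P.nonempty_of_mem_parts hC₀)
        omega
    rw [Finset.sum_const, smul_eq_mul, mul_one, h, hsum] at hlt
    exact lt_irrefl n hlt
  apply Finpartition.ext
  ext C
  rw [Finpartition.mem_bot_iff]
  constructor
  · intro hC
    obtain ⟨a, ha⟩ := Finset.card_eq_one.1 (hone C hC)
    exact ⟨a, Finset.mem_univ a, ha.symm⟩
  · rintro ⟨a, -, rfl⟩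
    have hpa : P.part a ∈ P.parts := P.part_mem.2 (Finset.mem_univ a)
    obtain ⟨x, hx⟩ := Finset.card_eq_one.1 (hone _ hpa)
    have hmem : a ∈ P.part a := P.mem_part (Finset.mem_univ a)
    rw [hx, Finset.mem_singleton] at hmem
    subst hmem
    exact hx ▸ hpa

end Stmt15
namespace Stmt15

variable {n : ℕ}

lemma blockPartition_congr {B B' : Finset (Fin n)} (h : B = B') (hB : B.Nonempty) :
    blockPartition B hB = blockPartition B' (h ▸ hB) := by
  subst h; rfl

lemma part_min_le {P : SP n} (h : avoids1_23 P) {j : Fin n} (hj : mn P j ≠ j) :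
    ∀ C ∈ P.parts, (P.part j).min ≤ C.min := by
  have haj : mn P j < j := lt_of_le_of_ne (mn_le P j) hj
  intro C hC
  by_contra hlt
  push_neg at hlt
  have hne : C.Nonempty := P.nonempty_of_mem_parts hC
  set c := C.min' hne with hc
  have hcmin : C.min = (c : Fin n) := (Finset.coe_min' _).symm
  have hca : c < mn P j := by
    have := hlt
    rw [hcmin, part_min_eq] at this
    exact WithTop.coe_lt_coe.1 this
  apply h
  refine ⟨c, mn P j, j, hca, haj, ?_, ?_⟩
  · exact ⟨P.part j, P.part_mem.2 (Finset.mem_univ j), mn_mem P j,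
      P.mem_part (Finset.mem_univ j)⟩
  · rintro hsb
    rw [inSameBlock_iff] at hsb
    have hcC : P.part c = C := P.part_eq_of_mem hC (Finset.min'_mem _ _)
    rw [hcC, part_mn] at hsb
    have hcmem : c ∈ P.part j := hsb ▸ Finset.min'_mem C hne
    exact absurd hca (not_lt.2 (Finset.min'_le _ _ hcmem))

lemma zero_mem_of_nonmin {P : SP n} (h : avoids1_23 P) {j : Fin n} (hj : mn P j ≠ j)
    {z : Fin n} (hz : ∀ x, z ≤ x) : z ∈ P.part j := by
  have h1 := part_min_le h hj (P.part z) (P.part_mem.2 (Finset.mem_univ z))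
  rw [part_min_eq, part_min_eq] at h1
  have h2 : mn P j ≤ mn P z := WithTop.coe_le_coe.1 h1
  have h3 : mn P z ≤ z := mn_le P z
  have h4 : z = mn P j := le_antisymm (hz _) (le_trans h2 h3)
  rw [h4]
  exact mn_mem P j

lemma downward_closed_eq_Iio {D : Finset (Fin n)} (h : ∀ x ∈ D, ∀ a, a < x → a ∈ D)
    {c : Fin n} (hc : D.card = (c : ℕ)) : D = Finset.Iio c := by
  ext x
  rw [Finset.mem_Iio]
  constructor
  · intro hx
    have hsub : Finset.Iic x ⊆ D := by
      intro a ha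
      rw [Finset.mem_Iic] at ha
      rcases lt_or_eq_of_le ha with h' | h'
      · exact h x hx a h'
      · exact h' ▸ hx
    have hle := Finset.card_le_card hsub
    rw [Fin.card_Iic, hc] at hle
    exact Fin.lt_def.2 (by omega)
  · intro hxc
    by_contra hx
    have hsub : D ⊆ Finset.Iio x := by
      intro d hd
      rw [Finset.mem_Iio]
      rcases lt_trichotomy d x with h' | h' | h'
      · exact h'
      · exact absurd (h' ▸ hd) hx
      · exact absurd (h d hd x h') hx
    have hle := Finset.card_le_card hsub
    rw [Fin.card_Iio, hc] at hle
    rw [Fin.lt_def] at hxc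
    omega

lemma upward_closed_eq_Ici {U : Finset (Fin n)} (h : ∀ x ∈ U, ∀ a, x < a → a ∈ U)
    {c : Fin n} (hc : U.card + (c : ℕ) = n) : U = Finset.Ici c := by
  ext x
  rw [Finset.mem_Ici]
  constructor
  · intro hx
    have hsub : Finset.Ici x ⊆ U := by
      intro a ha
      rw [Finset.mem_Ici] at ha
      rcases eq_or_lt_of_le ha with h' | h'
      · exact h' ▸ hx
      · exact h x hx a h'
    have hle := Finset.card_le_card hsub
    rw [Fin.card_Ici] at hle
    have hxn := x.isLt
    exact Fin.le_def.2 (by omega)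
  · intro hcx
    by_contra hx
    have hsub : U ⊆ Finset.Ioi x := by
      intro u hu
      rw [Finset.mem_Ioi]
      rcases lt_trichotomy x u with h' | h' | h'
      · exact h'
      · exact absurd (h' ▸ hu) hx
      · exact absurd (h u hu x h') hx
    have hle := Finset.card_le_card hsub
    rw [Fin.card_Ioi] at hle
    rw [Fin.le_def] at hcx
    have hxn := x.isLt
    omega

/-! ### Family 1: avoiding 1/23 -/

def bigB (c t : Fin n) : Finset (Fin n) := insert t (Finset.Iio c)

def P1 (c t : Fin n) : SP n :=
  blockPartition (bigB c t) ⟨t, Finset.mem_insert_self t _⟩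

lemma card_bigB {c t : Fin n} (h : c ≤ t) : (bigB c t).card = (c : ℕ) + 1 := by
  rw [bigB, Finset.card_insert_of_notMem (by rw [Finset.mem_Iio]; exact not_lt.2 h),
    Fin.card_Iio]

lemma card_parts_P1 {c t : Fin n} (h : c ≤ t) : (P1 c t).parts.card = n - (c : ℕ) := by
  rw [show (P1 c t).parts.card = 1 + (n - (bigB c t).card) from
    card_parts_blockPartition _ _, card_bigB h]
  have := c.isLt
  omega

lemma avoids1_23_P1 (c t : Fin n) : avoids1_23 (P1 c t) := by
  rintro ⟨a, b, c', hab, hbc, hsb, hnsb⟩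
  obtain ⟨C, hC, hb, hc'⟩ := hsb
  have hC' := mem_blockPartition.1 hC
  rcases hC' with rfl | ⟨i, hi, rfl⟩
  · -- C = bigB c t
    rw [bigB, Finset.mem_insert, Finset.mem_Iio] at hb hc'
    have hac : a < c := by
      rcases hb with hb | hb
      · rcases hc' with hc' | hc'
        · exact absurd (hb.trans hc'.symm) (ne_of_lt hbc)
        · exact lt_trans (lt_trans hab hbc) hc'
      · exact lt_trans hab hb
    refine hnsb ⟨bigB c t, hC, ?_, ?_⟩
    · rw [bigB, Finset.mem_insert, Finset.mem_Iio]
      exact Or.inr hac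
    · rw [bigB, Finset.mem_insert, Finset.mem_Iio]
      rcases hb with hb | hb
      · exact Or.inl hb
      · exact Or.inr hb
  · rw [Finset.mem_singleton] at hb hc'
    exact absurd (hb.trans hc'.symm) (ne_of_lt hbc)

lemma structure1 {k : ℕ} (hk : 1 ≤ k) (hkn : k < n) {P : SP n} (hcard : P.parts.card = k)
    (hav : avoids1_23 P) :
    ∃ t : Fin n, (⟨n - k, by omega⟩ : Fin n) ≤ t ∧ P = P1 ⟨n - k, by omega⟩ t := by
  have hn : 0 < n := by omega
  set c : Fin n := ⟨n - k, by omega⟩ with hcdef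
  set z : Fin n := ⟨0, hn⟩ with hzdef
  have hz : ∀ x : Fin n, z ≤ x := fun x => Fin.le_def.2 (Nat.zero_le _)
  set B₀ := P.part z with hB₀def
  have hB₀ : B₀ ∈ P.parts := P.part_mem.2 (Finset.mem_univ z)
  have hsing : ∀ C ∈ P.parts, C ≠ B₀ → ∃ i, C = {i} := by
    intro C hC hCB
    have hne := P.nonempty_of_mem_parts hC
    refine ⟨C.min' hne, Finset.eq_singleton_iff_unique_mem.2 ⟨Finset.min'_mem _ _, ?_⟩⟩
    intro x hx
    by_contra hxne
    have hpx : P.part x = C := P.part_eq_of_mem hC hx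
    have hmnx : mn P x = C.min' hne := by
      simp only [mn]
      congr 1
    have hmn : mn P x ≠ x := by rw [hmnx]; exact fun h => hxne h.symm
    have hzx : z ∈ P.part x := zero_mem_of_nonmin hav hmn hz
    have : B₀ = P.part x := P.part_eq_of_mem (P.part_mem.2 (Finset.mem_univ x)) hzx
    exact hCB (by rw [← hpx, ← this])
  have hPB := eq_blockPartition P hB₀ hsing
  have hcardB : B₀.card = n - k + 1 := by
    have h1 := card_parts_blockPartition B₀ (P.nonempty_of_mem_parts hB₀)
    rw [← hPB, hcard] at h1
    have h2 : B₀.card ≤ n := by simpa using Finset.card_le_univ B₀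
    omega
  have hneB : B₀.Nonempty := P.nonempty_of_mem_parts hB₀
  set t := B₀.max' hneB with htdef
  have htB : t ∈ B₀ := Finset.max'_mem _ _
  set D := B₀.erase t with hDdef
  have hDcard : D.card = n - k := by
    rw [hDdef, Finset.card_erase_of_mem htB, hcardB]
    omega
  have hdc : ∀ x ∈ D, ∀ a, a < x → a ∈ D := by
    intro x hx a hax
    have hxB : x ∈ B₀ := Finset.mem_of_mem_erase hx
    have hxt : x ≠ t := Finset.ne_of_mem_erase hx
    have hxlt : x < t := lt_of_le_of_ne (Finset.le_max' _ _ hxB) hxt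
    have haB : a ∈ B₀ := by
      by_contra haB
      apply hav
      refine ⟨a, x, t, hax, hxlt, ⟨B₀, hB₀, hxB, htB⟩, ?_⟩
      rintro ⟨C, hC, haC, hxC⟩
      have hCB : C = B₀ := P.eq_of_mem_parts hC hB₀ hxC hxB
      exact haB (hCB ▸ haC)
    exact Finset.mem_erase.2 ⟨ne_of_lt (lt_trans hax hxlt), haB⟩
  have hDIio : D = Finset.Iio c := downward_closed_eq_Iio hdc (by rw [hDcard, hcdef])
  have hct : c ≤ t := by
    by_contra hcon
    push_neg at hcon
    have : t ∈ D := hDIio ▸ Finset.mem_Iio.2 hcon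
    exact (Finset.notMem_erase t B₀) this
  refine ⟨t, hct, ?_⟩
  have hBbig : B₀ = bigB c t := by
    rw [bigB, ← hDIio, hDdef, Finset.insert_erase htB]
  rw [hPB, P1]
  exact blockPartition_congr hBbig _

/-! ### Family 2: avoiding 12/3 -/

def smallB (c s : Fin n) : Finset (Fin n) := insert s (Finset.Ici c)

def P2 (c s : Fin n) : SP n :=
  blockPartition (smallB c s) ⟨s, Finset.mem_insert_self s _⟩

lemma card_smallB {c s : Fin n} (h : s < c) : (smallB c s).card = (n - (c : ℕ)) + 1 := by
  rw [smallB, Finset.card_insert_of_notMem (by rw [Finset.mem_Ici]; exact not_le.2 h),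
    Fin.card_Ici]

lemma card_parts_P2 {c s : Fin n} (h : s < c) : (P2 c s).parts.card = (c : ℕ) := by
  rw [show (P2 c s).parts.card = 1 + (n - (smallB c s).card) from
    card_parts_blockPartition _ _, card_smallB h]
  have := c.isLt
  have hs : (s : ℕ) < (c : ℕ) := h
  omega

lemma avoids12_3_P2 (c s : Fin n) (h : s < c) : avoids12_3 (P2 c s) := by
  rintro ⟨a, b, c', hab, hbc, hsb, hnsb⟩
  obtain ⟨C, hC, ha, hb⟩ := hsb
  have hC' := mem_blockPartition.1 hC
  rcases hC' with rfl | ⟨i, hi, rfl⟩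
  · rw [smallB, Finset.mem_insert, Finset.mem_Ici] at ha hb
    have hbc2 : c ≤ b := by
      rcases hb with hb | hb
      · rcases ha with ha | ha
        · exact absurd (ha.trans hb.symm) (ne_of_lt hab)
        · exact absurd (lt_trans (hb ▸ hab) h) (not_lt.2 ha)
      · exact hb
    refine hnsb ⟨smallB c s, hC, ?_, ?_⟩
    · rw [smallB, Finset.mem_insert, Finset.mem_Ici]
      rcases ha with ha | ha
      · exact Or.inl ha
      · exact Or.inr ha
    · rw [smallB, Finset.mem_insert, Finset.mem_Ici]
      exact Or.inr (le_trans hbc2 (le_of_lt hbc))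
  · rw [Finset.mem_singleton] at ha hb
    exact absurd (ha.trans hb.symm) (ne_of_lt hab)

lemma structure2 {k : ℕ} (hk : 1 ≤ k) (hkn : k < n) {P : SP n} (hcard : P.parts.card = k)
    (hav : avoids12_3 P) :
    ∃ s : Fin n, s < (⟨k, hkn⟩ : Fin n) ∧ P = P2 ⟨k, hkn⟩ s := by
  have hn : 0 < n := by omega
  set c : Fin n := ⟨k, hkn⟩ with hcdef
  set z : Fin n := ⟨n - 1, by omega⟩ with hzdef
  have hz : ∀ x : Fin n, x ≤ z := fun x => Fin.le_def.2 (by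
    have := x.isLt
    show (x : ℕ) ≤ n - 1
    omega)
  set B₁ := P.part z with hB₁def
  have hB₁ : B₁ ∈ P.parts := P.part_mem.2 (Finset.mem_univ z)
  have hsing : ∀ C ∈ P.parts, C ≠ B₁ → ∃ i, C = {i} := by
    intro C hC hCB
    have hne := P.nonempty_of_mem_parts hC
    refine ⟨C.max' hne, Finset.eq_singleton_iff_unique_mem.2 ⟨Finset.max'_mem _ _, ?_⟩⟩
    intro x hx
    by_contra hxne
    set M := C.max' hne with hMdef
    have hMC : M ∈ C := Finset.max'_mem _ _
    have hpM : P.part M = C := P.part_eq_of_mem hC hMC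
    have hmnM : mn P M = C.min' hne := by
      simp only [mn]
      congr 1
    have hxM : x < M := lt_of_le_of_ne (Finset.le_max' _ _ hx) hxne
    have hminx : C.min' hne ≤ x := Finset.min'_le _ _ hx
    have hmn : mn P M ≠ M := by
      rw [hmnM]
      exact fun hcon => absurd (lt_of_le_of_lt (hcon ▸ hminx) hxM) (lt_irrefl _)
    have hzM : z ≠ M := by
      intro hcon
      exact hCB (by rw [← hpM, ← hcon])
    have hzgt : M < z := lt_of_le_of_ne (hz M) (fun hcon => hzM hcon.symm)
    have := nonmin_suffix hav hmn hzgt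
    rw [hpM] at this
    exact hCB (by rw [← this])
  have hPB := eq_blockPartition P hB₁ hsing
  have hcardB : B₁.card = n - k + 1 := by
    have h1 := card_parts_blockPartition B₁ (P.nonempty_of_mem_parts hB₁)
    rw [← hPB, hcard] at h1
    have h2 : B₁.card ≤ n := by simpa using Finset.card_le_univ B₁
    omega
  have hneB : B₁.Nonempty := P.nonempty_of_mem_parts hB₁
  set s := B₁.min' hneB with hsdef
  have hsB : s ∈ B₁ := Finset.min'_mem _ _
  set U := B₁.erase s with hUdef
  have hUcard : U.card = n - k := by
    rw [hUdef, Finset.card_erase_of_mem hsB, hcardB]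
    omega
  have hups : ∀ x ∈ U, ∀ a, x < a → a ∈ U := by
    intro x hx a hax
    have hxB : x ∈ B₁ := Finset.mem_of_mem_erase hx
    have hxs : x ≠ s := Finset.ne_of_mem_erase hx
    have hslt : s < x := lt_of_le_of_ne (Finset.min'_le _ _ hxB) (fun h => hxs h.symm)
    have hpx : P.part x = B₁ := P.part_eq_of_mem hB₁ hxB
    have hmnx : mn P x ≠ x := by
      have : mn P x = B₁.min' hneB := by
        simp only [mn]
        congr 1
      rw [this]
      exact fun hcon => absurd (hcon ▸ hslt) (lt_irrefl _)
    have := nonmin_suffix hav hmnx hax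
    rw [hpx] at this
    have haB : a ∈ B₁ := this ▸ P.mem_part (Finset.mem_univ a)
    exact Finset.mem_erase.2 ⟨ne_of_gt (lt_trans hslt hax), haB⟩
  have hUIci : U = Finset.Ici c := upward_closed_eq_Ici hups (by
    rw [hUcard]
    show n - k + k = n
    omega)
  have hsc : s < c := by
    by_contra hcon
    push_neg at hcon
    have : s ∈ U := hUIci ▸ Finset.mem_Ici.2 hcon
    exact (Finset.notMem_erase s B₁) this
  refine ⟨s, hsc, ?_⟩
  have hBsmall : B₁ = smallB c s := by
    rw [smallB, ← hUIci, hUdef, Finset.insert_erase hsB]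
  rw [hPB, P2]
  exact blockPartition_congr hBsmall _

end Stmt15
namespace Stmt15

variable {n : ℕ}

lemma P1_injOn {c : Fin n} (hc : 0 < (c : ℕ)) :
    Set.InjOn (P1 c) (Finset.Ici c) := by
  intro t ht t' ht' h
  rw [Finset.mem_coe, Finset.mem_Ici] at ht ht'
  have hmem : bigB c t ∈ (P1 c t').parts := by
    rw [← h]
    exact mem_blockPartition.2 (Or.inl rfl)
  rcases mem_blockPartition.1 hmem with heq | ⟨i, hi, heq⟩
  · have ht'' : t ∈ bigB c t' := heq ▸ Finset.mem_insert_self t _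
    rw [bigB, Finset.mem_insert, Finset.mem_Iio] at ht''
    rcases ht'' with h' | h'
    · exact h'
    · exact absurd h' (not_lt.2 ht)
  · exfalso
    have hz : (⟨0, lt_of_le_of_lt (Nat.zero_le _) c.isLt⟩ : Fin n) ∈ bigB c t := by
      rw [bigB, Finset.mem_insert, Finset.mem_Iio]
      exact Or.inr (Fin.lt_def.2 hc)
    have htb : t ∈ bigB c t := Finset.mem_insert_self t _
    rw [heq, Finset.mem_singleton] at hz htb
    have : (⟨0, lt_of_le_of_lt (Nat.zero_le _) c.isLt⟩ : Fin n) = t := hz.trans htb.symm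
    have h1 : (0 : ℕ) = (t : ℕ) := congrArg Fin.val this
    have h2 : (c : ℕ) ≤ (t : ℕ) := ht
    omega

lemma P2_injOn {c : Fin n} : Set.InjOn (P2 c) (Finset.Iio c) := by
  intro s hs s' hs' h
  rw [Finset.mem_coe, Finset.mem_Iio] at hs hs'
  have hmem : smallB c s ∈ (P2 c s').parts := by
    rw [← h]
    exact mem_blockPartition.2 (Or.inl rfl)
  rcases mem_blockPartition.1 hmem with heq | ⟨i, hi, heq⟩
  · have hs'' : s ∈ smallB c s' := heq ▸ Finset.mem_insert_self s _
    rw [smallB, Finset.mem_insert, Finset.mem_Ici] at hs''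
    rcases hs'' with h' | h'
    · exact h'
    · exact absurd h' (not_le.2 hs)
  · exfalso
    have hcmem : c ∈ smallB c s := by
      rw [smallB, Finset.mem_insert, Finset.mem_Ici]
      exact Or.inr (le_refl c)
    have hsmem : s ∈ smallB c s := Finset.mem_insert_self s _
    rw [heq, Finset.mem_singleton] at hcmem hsmem
    exact absurd (hcmem.trans hsmem.symm) (ne_of_gt hs)

open Classical in
lemma filter_eq_image1 {k : ℕ} (hk : 1 ≤ k) (hkn : k < n) :
    Finset.univ.filter (fun P : SP n => P.parts.card = k ∧ avoids1_23 P) =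
      (Finset.Ici (⟨n - k, by omega⟩ : Fin n)).image (P1 ⟨n - k, by omega⟩) := by
  ext P
  simp only [Finset.mem_filter, Finset.mem_univ, true_and, Finset.mem_image, Finset.mem_Ici]
  constructor
  · rintro ⟨hcard, hav⟩
    obtain ⟨t, ht, hPt⟩ := structure1 hk hkn hcard hav
    exact ⟨t, ht, hPt.symm⟩
  · rintro ⟨t, ht, rfl⟩
    refine ⟨?_, avoids1_23_P1 _ _⟩
    rw [card_parts_P1 ht]
    show n - (n - k) = k
    omega

open Classical in
lemma filter_eq_image2 {k : ℕ} (hk : 1 ≤ k) (hkn : k < n) :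
    Finset.univ.filter (fun P : SP n => P.parts.card = k ∧ avoids12_3 P) =
      (Finset.Iio (⟨k, hkn⟩ : Fin n)).image (P2 ⟨k, hkn⟩) := by
  ext P
  simp only [Finset.mem_filter, Finset.mem_univ, true_and, Finset.mem_image, Finset.mem_Iio]
  constructor
  · rintro ⟨hcard, hav⟩
    obtain ⟨s, hs, hPs⟩ := structure2 hk hkn hcard hav
    exact ⟨s, hs, hPs.symm⟩
  · rintro ⟨s, hs, rfl⟩
    exact ⟨card_parts_P2 hs, avoids12_3_P2 _ _ hs⟩

open Classical in
lemma filter_eq_singleton_bot (avoid : SP n → Prop) (hbot : avoid (⊥ : SP n)) :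
    Finset.univ.filter (fun P : SP n => P.parts.card = n ∧ avoid P) = {(⊥ : SP n)} := by
  ext P
  simp only [Finset.mem_filter, Finset.mem_univ, true_and, Finset.mem_singleton]
  constructor
  · rintro ⟨hcard, -⟩
    exact eq_bot_of_card hcard
  · rintro rfl
    exact ⟨card_parts_bot, hbot⟩

open Classical in
lemma genPoly_eq_card_mul (k : ℕ) (avoid : SP n → Prop) (stat : (Fin n → ℕ) → ℕ)
    (hstat : ∀ P : SP n, P.parts.card = k → avoid P → stat (rgf P) = k.choose 2) :
    genPoly n k avoid stat =
      (((Finset.univ.filter (fun P : SP n => P.parts.card = k ∧ avoid P)).card : ℕ) :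
          Polynomial ℕ) * Polynomial.X ^ (k.choose 2) := by
  rw [genPoly]
  have hcong : ∀ P ∈ Finset.univ.filter (fun P : SP n => P.parts.card = k ∧ avoid P),
      (Polynomial.X : Polynomial ℕ) ^ stat (rgf P) = Polynomial.X ^ k.choose 2 := by
    intro P hP
    rw [Finset.mem_filter] at hP
    rw [hstat P hP.2.1 hP.2.2]
  rw [Finset.sum_congr rfl hcong, Finset.sum_const, nsmul_eq_mul]

end Stmt15
/-- For `n ≥ k ≥ 1`, `LS_{n,k}(1/23, r) = RB_{n,k}(12/3, r)`, both being
`k · r^{C(k,2)}` when `n > k` and `r^{C(k,2)}` when `n = k`. -/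
theorem stmt15 (n k : ℕ) (hk : 1 ≤ k) (hkn : k ≤ n) :
    genPoly n k avoids1_23 lsStat = genPoly n k avoids12_3 rbStat ∧
    (k < n → genPoly n k avoids1_23 lsStat =
      (k : Polynomial ℕ) * (X : Polynomial ℕ) ^ (k.choose 2)) ∧
    (k = n → genPoly n k avoids1_23 lsStat = (X : Polynomial ℕ) ^ (k.choose 2)) := by
  classical
  have hls : ∀ P : SP n, P.parts.card = k → avoids1_23 P → lsStat (rgf P) = k.choose 2 :=
    fun P hc ha => by rw [Stmt15.lsStat_eq ha, hc]
  have hrb : ∀ P : SP n, P.parts.card = k → avoids12_3 P → rbStat (rgf P) = k.choose 2 :=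
    fun P hc ha => by rw [Stmt15.rbStat_eq ha, hc]
  have h1 := Stmt15.genPoly_eq_card_mul k avoids1_23 lsStat hls
  have h2 := Stmt15.genPoly_eq_card_mul k avoids12_3 rbStat hrb
  rcases eq_or_lt_of_le hkn with heq | hlt
  · subst heq
    rw [Stmt15.filter_eq_singleton_bot avoids1_23 Stmt15.avoids1_23_bot, Finset.card_singleton,
      Nat.cast_one, one_mul] at h1
    rw [Stmt15.filter_eq_singleton_bot avoids12_3 Stmt15.avoids12_3_bot, Finset.card_singleton,
      Nat.cast_one, one_mul] at h2
    exact ⟨h1.trans h2.symm, fun h => absurd h (lt_irrefl _), fun _ => h1⟩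
  · have hc1 : (Finset.univ.filter
        (fun P : SP n => P.parts.card = k ∧ avoids1_23 P)).card = k := by
      rw [Stmt15.filter_eq_image1 hk hlt,
        Finset.card_image_of_injOn (Stmt15.P1_injOn (by show 0 < n - k; omega)),
        Fin.card_Ici]
      show n - (n - k) = k
      omega
    have hc2 : (Finset.univ.filter
        (fun P : SP n => P.parts.card = k ∧ avoids12_3 P)).card = k := by
      rw [Stmt15.filter_eq_image2 hk hlt,
        Finset.card_image_of_injOn Stmt15.P2_injOn, Fin.card_Iio]
    rw [hc1] at h1
    rw [hc2] at h2
    exact ⟨h1.trans h2.symm, fun _ => h1, fun h => absurd h (by omega)⟩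
end

section
/- For ⌈n/2⌉ ≤ k ≤ n, the degree of the polynomial RS_{n,k}(123, t) is (n-k)(k-1) and its leading coefficient is 1. -/
open Finset Polynomial

namespace Aux18

variable {n k : ℕ}

/-- Fiber of value `v` under word `w`. -/
def fib (w : Fin n → ℕ) (v : ℕ) : Finset (Fin n) := univ.filter (fun i => w i = v)

lemma mem_fib {w : Fin n → ℕ} {v : ℕ} {i : Fin n} : i ∈ fib w v ↔ w i = v := by
  simp [fib]

/-- Restricted growth words with `k` values and fibers of size at most 2. -/
def IsRGF2 (n k : ℕ) (w : Fin n → ℕ) : Prop :=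
  (∀ i, 1 ≤ w i ∧ w i ≤ k) ∧
  (∀ v, 1 ≤ v → v ≤ k → (fib w v).Nonempty ∧ (fib w v).card ≤ 2) ∧
  (∀ (j : Fin n) (v : ℕ), 1 ≤ v → v < w j → ∃ i : Fin n, i < j ∧ w i = v)

/-- The extremal word. -/
def wstar (n k : ℕ) : Fin n → ℕ := fun i => if (i : ℕ) < k then (i : ℕ) + 1 else n - (i : ℕ)

noncomputable def fpos (hn : 0 < n) (w : Fin n → ℕ) (v : ℕ) : Fin n :=
  if h : (fib w v).Nonempty then (fib w v).min' h else ⟨0, hn⟩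

noncomputable def lpos (hn : 0 < n) (w : Fin n → ℕ) (v : ℕ) : Fin n :=
  if h : (fib w v).Nonempty then (fib w v).max' h else ⟨0, hn⟩

section posAPI
variable {w : Fin n → ℕ} {v : ℕ} (hn : 0 < n)

lemma fpos_mem (h : (fib w v).Nonempty) : fpos hn w v ∈ fib w v := by
  rw [fpos, dif_pos h]; exact Finset.min'_mem _ _

lemma lpos_mem (h : (fib w v).Nonempty) : lpos hn w v ∈ fib w v := by
  rw [lpos, dif_pos h]; exact Finset.max'_mem _ _

lemma w_fpos (h : (fib w v).Nonempty) : w (fpos hn w v) = v := mem_fib.1 (fpos_mem hn h)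

lemma w_lpos (h : (fib w v).Nonempty) : w (lpos hn w v) = v := mem_fib.1 (lpos_mem hn h)

lemma fpos_le {i : Fin n} (hi : i ∈ fib w v) : fpos hn w v ≤ i := by
  rw [fpos, dif_pos ⟨i, hi⟩]; exact Finset.min'_le _ _ hi

lemma le_lpos {i : Fin n} (hi : i ∈ fib w v) : i ≤ lpos hn w v := by
  rw [lpos, dif_pos ⟨i, hi⟩]; exact Finset.le_max' _ _ hi

lemma fpos_le_lpos (h : (fib w v).Nonempty) : fpos hn w v ≤ lpos hn w v :=
  le_lpos hn (fpos_mem hn h)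

lemma fpos_lt_lpos (h : (fib w v).card = 2) : fpos hn w v < lpos hn w v := by
  have hne : (fib w v).Nonempty := Finset.card_pos.1 (by omega)
  rw [fpos, dif_pos hne, lpos, dif_pos hne]
  exact Finset.min'_lt_max'_of_card _ (by omega)

lemma eq_fpos_or_lpos (h : (fib w v).card = 2) {x : Fin n} (hx : x ∈ fib w v) :
    x = fpos hn w v ∨ x = lpos hn w v := by
  rcases Finset.card_eq_two.1 h with ⟨a, b, hab, hab2⟩
  have h1 : fpos hn w v = a ∨ fpos hn w v = b := by
    have := fpos_mem hn (Finset.card_pos.1 (by omega) : (fib w v).Nonempty)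
    rw [hab2] at this; simpa using this
  have h2 : lpos hn w v = a ∨ lpos hn w v = b := by
    have := lpos_mem hn (Finset.card_pos.1 (by omega) : (fib w v).Nonempty)
    rw [hab2] at this; simpa using this
  have hfl : fpos hn w v ≠ lpos hn w v := (fpos_lt_lpos hn h).ne
  rw [hab2] at hx; simp only [Finset.mem_insert, Finset.mem_singleton] at hx
  rcases hx with rfl | rfl <;> rcases h1 with h1 | h1 <;> rcases h2 with h2 | h2 <;> simp_all

end posAPI

/-! ### counting helpers -/

lemma card_filter_val_lt {n : ℕ} (b : ℕ) (hb : b ≤ n) :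
    (univ.filter (fun j : Fin n => (j : ℕ) < b)).card = b := by
  have : (univ.filter (fun j : Fin n => (j : ℕ) < b)) =
      (Finset.range b).attachFin (fun m hm => lt_of_lt_of_le (Finset.mem_range.1 hm) hb) := by
    ext j; simp [Finset.mem_attachFin]
  rw [this, Finset.card_attachFin, Finset.card_range]

lemma card_le_of_lt {n : ℕ} {S : Finset (Fin n)} {p : Fin n}
    (h : ∀ x ∈ S, x < p) : S.card ≤ (p : ℕ) := by
  calc S.card ≤ (univ.filter (fun j : Fin n => (j : ℕ) < (p : ℕ))).card := by
        apply Finset.card_le_card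
        intro x hx; simp only [Finset.mem_filter, Finset.mem_univ, true_and]
        exact h x hx
    _ = (p : ℕ) := card_filter_val_lt _ p.2.le

lemma card_le_of_gt {n : ℕ} {S : Finset (Fin n)} {p : Fin n}
    (h : ∀ x ∈ S, p < x) : S.card + (p : ℕ) + 1 ≤ n := by
  have h1 : S ⊆ univ \ (univ.filter (fun j : Fin n => (j : ℕ) < (p : ℕ) + 1)) := by
    intro x hx
    simp only [Finset.mem_sdiff, Finset.mem_univ, true_and, Finset.mem_filter, not_lt]
    exact Nat.succ_le_of_lt (h x hx)
  have h2 := Finset.card_le_card h1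
  rw [Finset.card_sdiff_of_subset (Finset.filter_subset _ _), card_filter_val_lt _ p.2,
    Finset.card_univ, Fintype.card_fin] at h2
  omega

lemma Ioc_top_eq (N m : ℕ) (hm : m ≤ N) :
    Finset.Ioc (N - m) N = Finset.image (fun x => x + (N - m)) (Finset.Ioc 0 m) := by
  ext x
  simp only [Finset.mem_Ioc, Finset.mem_image]
  constructor
  · intro ⟨h1, h2⟩; exact ⟨x - (N - m), by omega, by omega⟩
  · rintro ⟨y, ⟨hy1, hy2⟩, rfl⟩; omega

lemma sum_Ioc_top (N m : ℕ) (hm : m ≤ N) :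
    (∑ i ∈ Finset.Ioc (N - m) N, i) = (∑ v ∈ Finset.Ioc 0 m, v) + m * (N - m) := by
  rw [Ioc_top_eq N m hm, Finset.sum_image (by intro a _ b _ h; simp only at h; omega)]
  rw [Finset.sum_add_distrib, Finset.sum_const, Nat.card_Ioc, Nat.sub_zero, smul_eq_mul]

/-- Sum of `k` distinct positive integers, all at most `n`, is at most the top-`k` sum,
with equality only for the top set. -/
lemma topSum : ∀ n k : ℕ, ∀ s : Finset ℕ, s ⊆ Finset.Ioc 0 n → s.card = k →
    ((∑ i ∈ s, i) ≤ ∑ i ∈ Finset.Ioc (n - k) n, i ∧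
      ((∑ i ∈ s, i) = ∑ i ∈ Finset.Ioc (n - k) n, i → s = Finset.Ioc (n - k) n)) := by
  intro n
  induction n with
  | zero =>
    intro k s hs hcard
    have : s = ∅ := Finset.subset_empty.1 (by simpa using hs)
    subst this
    simp at hcard; subst hcard; simp
  | succ n ih =>
    intro k s hs hcard
    have hkn : k ≤ n + 1 := hcard ▸ (Finset.card_le_card hs).trans (by simp)
    by_cases hmem : n + 1 ∈ s
    · have hk1 : 1 ≤ k := by
        rw [← hcard]; exact Finset.card_pos.2 ⟨_, hmem⟩
      set s' := s.erase (n + 1) with hs'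
      have hsub : s' ⊆ Finset.Ioc 0 n := by
        intro x hx
        have hx1 := hs (Finset.mem_of_mem_erase hx)
        have hx2 := Finset.ne_of_mem_erase hx
        simp only [Finset.mem_Ioc] at *
        omega
      have hc' : s'.card = k - 1 := by rw [hs', Finset.card_erase_of_mem hmem, hcard]
      obtain ⟨ihle, iheq⟩ := ih (k - 1) s' hsub hc'
      have hsum : (∑ i ∈ s, i) = (n + 1) + ∑ i ∈ s', i := by
        rw [hs']; exact (Finset.add_sum_erase s (fun i => i) hmem).symm
      have hIoc : Finset.Ioc (n + 1 - k) (n + 1) = insert (n + 1) (Finset.Ioc (n - (k - 1)) n) := by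
        ext x; simp only [Finset.mem_Ioc, Finset.mem_insert]; omega
      have hnotmem : n + 1 ∉ Finset.Ioc (n - (k - 1)) n := by simp
      have hIsum : (∑ i ∈ Finset.Ioc (n + 1 - k) (n + 1), i)
          = (n + 1) + ∑ i ∈ Finset.Ioc (n - (k - 1)) n, i := by
        rw [hIoc, Finset.sum_insert hnotmem]
      constructor
      · rw [hsum, hIsum]; omega
      · intro heq
        rw [hsum, hIsum] at heq
        have := iheq (by omega)
        rw [hIoc, ← this, hs']
        rw [Finset.insert_erase hmem]
    · -- n+1 ∉ s, so s ⊆ Ioc 0 n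
      have hsub : s ⊆ Finset.Ioc 0 n := by
        intro x hx
        have h1 := hs hx
        have h2 : x ≠ n + 1 := fun h => hmem (h ▸ hx)
        simp only [Finset.mem_Ioc] at *
        omega
      have hkn' : k ≤ n := hcard ▸ (Finset.card_le_card hsub).trans (by simp)
      obtain ⟨ihle, _⟩ := ih k s hsub hcard
      by_cases hk0 : k = 0
      · subst hk0
        have : s = ∅ := Finset.card_eq_zero.1 hcard
        subst this
        simp
      · have hlt : (∑ i ∈ Finset.Ioc (n - k) n, i) < ∑ i ∈ Finset.Ioc (n + 1 - k) (n + 1), i := by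
          rw [sum_Ioc_top n k hkn', sum_Ioc_top (n + 1) k (by omega)]
          have : k * (n + 1 - k) = k * (n - k) + k := by
            have : n + 1 - k = (n - k) + 1 := by omega
            rw [this, Nat.mul_succ]
          omega
        constructor
        · omega
        · intro heq; omega

/-! ### fiber counting -/

lemma sum_card_fib (hw : IsRGF2 n k w) :
    (∑ v ∈ Finset.Ioc 0 k, (fib w v).card) = n := by
  classical
  have hdisj : ((Finset.Ioc 0 k : Finset ℕ) : Set ℕ).PairwiseDisjoint (fib w) := by
    intro u _ v _ huv
    simp only [Function.onFun, Finset.disjoint_left]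
    intro i hi hi'
    exact huv ((mem_fib.1 hi).symm.trans (mem_fib.1 hi'))
  have hunion : (Finset.Ioc 0 k).biUnion (fib w) = univ := by
    ext i
    simp only [Finset.mem_biUnion, Finset.mem_univ, iff_true, Finset.mem_Ioc, mem_fib]
    exact ⟨w i, ⟨(hw.1 i).1, (hw.1 i).2⟩, rfl⟩
  rw [← Finset.card_biUnion (fun u hu v hv huv => hdisj hu hv huv), hunion, Finset.card_univ,
    Fintype.card_fin]

lemma bounds (hw : IsRGF2 n k w) : k ≤ n ∧ n ≤ 2 * k := by
  have h := sum_card_fib hw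
  constructor
  · calc k = ∑ _v ∈ Finset.Ioc 0 k, 1 := by simp
      _ ≤ _ := Finset.sum_le_sum (fun v hv => by
          simp only [Finset.mem_Ioc] at hv
          exact Finset.card_pos.2 ((hw.2.1 v hv.1 hv.2).1))
      _ = n := h
  · calc n = ∑ v ∈ Finset.Ioc 0 k, (fib w v).card := h.symm
      _ ≤ ∑ _v ∈ Finset.Ioc 0 k, 2 := Finset.sum_le_sum (fun v hv => by
          simp only [Finset.mem_Ioc] at hv
          exact (hw.2.1 v hv.1 hv.2).2)
      _ = 2 * k := by simp [mul_comm]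

lemma fpos_strictMono (hn : 0 < n) (hw : IsRGF2 n k w) {u v : ℕ}
    (hu : 1 ≤ u) (hv : v ≤ k) (huv : u < v) : fpos hn w u < fpos hn w v := by
  have hvne : (fib w v).Nonempty := (hw.2.1 v (by omega) hv).1
  obtain ⟨i, hi, hiw⟩ := hw.2.2 (fpos hn w v) u hu (by rw [w_fpos hn hvne]; exact huv)
  exact lt_of_le_of_lt (fpos_le hn (mem_fib.2 hiw)) hi

/-! ### the per-value decomposition of `rsStat` -/

noncomputable def Tset (hn : 0 < n) (w : Fin n → ℕ) (v : ℕ) : Finset (Fin n) :=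
  univ.filter (fun j => v < w j ∧ j < lpos hn w v)

noncomputable def Gset (hn : 0 < n) (w : Fin n → ℕ) (v : ℕ) : Finset (Fin n) :=
  univ.filter (fun j => w j ≤ v ∧ j < lpos hn w v)

lemma sum_card_filter_comm {α β : Type*} (s : Finset α) (t : Finset β) (p : α → β → Prop)
    [∀ a b, Decidable (p a b)] :
    (∑ a ∈ s, (t.filter (fun b => p a b)).card) = ∑ b ∈ t, (s.filter (fun a => p a b)).card := by
  simp_rw [Finset.card_filter]
  exact Finset.sum_comm

lemma rs_eq (hn : 0 < n) (hw : ∀ i, 1 ≤ w i ∧ w i ≤ k) :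
    rsStat w = ∑ v ∈ Finset.Ioc 0 k, (Tset hn w v).card := by
  classical
  have hstep : ∀ j : Fin n,
      ((univ.filter (fun i => j < i)).image w).filter (fun v => v < w j)
        = (Finset.Ioc 0 k).filter (fun v => v < w j ∧ j < lpos hn w v) := by
    intro j
    ext v
    simp only [Finset.mem_filter, Finset.mem_image, Finset.mem_univ, true_and, Finset.mem_Ioc]
    constructor
    · rintro ⟨⟨i, hji, rfl⟩, hlt⟩
      have hif : i ∈ fib w (w i) := mem_fib.2 rfl
      exact ⟨⟨(hw i).1, (hw i).2⟩, hlt, lt_of_lt_of_le hji (le_lpos hn hif)⟩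
    · rintro ⟨⟨hv0, hvk⟩, hlt, hjl⟩
      refine ⟨⟨lpos hn w v, hjl, ?_⟩, hlt⟩
      by_cases hne : (fib w v).Nonempty
      · exact w_lpos hn hne
      · exfalso
        have : lpos hn w v = ⟨0, hn⟩ := by rw [lpos, dif_neg hne]
        rw [this] at hjl
        exact absurd hjl (by simp [Fin.lt_def])
  unfold rsStat
  calc (∑ j : Fin n, (((univ.filter (fun i => j < i)).image w).filter (fun v => v < w j)).card)
      = ∑ j : Fin n, ((Finset.Ioc 0 k).filter (fun v => v < w j ∧ j < lpos hn w v)).card := by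
        exact Finset.sum_congr rfl (fun j _ => by rw [hstep j])
    _ = ∑ v ∈ Finset.Ioc 0 k, (Tset hn w v).card := by
        rw [sum_card_filter_comm (univ : Finset (Fin n)) (Finset.Ioc 0 k)
          (fun j v => v < w j ∧ j < lpos hn w v)]
        rfl

lemma TG_card (hn : 0 < n) (w : Fin n → ℕ) (v : ℕ) :
    (Tset hn w v).card + (Gset hn w v).card = (lpos hn w v : ℕ) := by
  classical
  have hdisj : Disjoint (Tset hn w v) (Gset hn w v) := by
    simp only [Finset.disjoint_left, Tset, Gset, Finset.mem_filter, Finset.mem_univ, true_and]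
    rintro j ⟨h1, _⟩ ⟨h2, _⟩
    omega
  have hunion : Tset hn w v ∪ Gset hn w v = (univ : Finset (Fin n)).filter (fun j : Fin n => (j : ℕ) < (lpos hn w v : ℕ)) := by
    ext j
    simp only [Finset.mem_union, Tset, Gset, Finset.mem_filter, Finset.mem_univ, true_and,
      Fin.lt_def]
    omega
  rw [← Finset.card_union_of_disjoint hdisj, hunion, card_filter_val_lt _ (lpos hn w v).2.le]

lemma img_G (hn : 0 < n) (hw : IsRGF2 n k w) {v : ℕ} (hv0 : 0 < v) (hvk : v ≤ k) :
    Finset.image (fpos hn w) (Finset.Ioc 0 (v - 1 + ((fib w v).card - 1))) ⊆ Gset hn w v ∧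
    (Finset.image (fpos hn w) (Finset.Ioc 0 (v - 1 + ((fib w v).card - 1)))).card
      = v - 1 + ((fib w v).card - 1) := by
  classical
  have hvne : (fib w v).Nonempty := (hw.2.1 v hv0 hvk).1
  have hc2 : (fib w v).card ≤ 2 := (hw.2.1 v hv0 hvk).2
  have hc1 : 1 ≤ (fib w v).card := Finset.card_pos.2 hvne
  have hsub : ∀ u ∈ Finset.Ioc 0 (v - 1 + ((fib w v).card - 1)), 1 ≤ u ∧ u ≤ v := by
    intro u hu
    simp only [Finset.mem_Ioc] at hu
    omega
  constructor
  · intro x hx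
    obtain ⟨u, hu, rfl⟩ := Finset.mem_image.1 hx
    obtain ⟨hu1, huv⟩ := hsub u hu
    have hune : (fib w u).Nonempty := (hw.2.1 u hu1 (le_trans huv hvk)).1
    simp only [Gset, Finset.mem_filter, Finset.mem_univ, true_and]
    refine ⟨by rw [w_fpos hn hune]; exact huv, ?_⟩
    rcases lt_or_eq_of_le huv with h | rfl
    · exact lt_of_lt_of_le (fpos_strictMono hn hw hu1 hvk h) (fpos_le_lpos hn hvne)
    · have hcard2 : (fib w u).card = 2 := by
        simp only [Finset.mem_Ioc] at hu
        omega
      exact fpos_lt_lpos hn hcard2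
  · have hinj : Set.InjOn (fpos hn w) (Finset.Ioc 0 (v - 1 + ((fib w v).card - 1))) := by
      intro a ha b hb hab
      simp only [Finset.coe_Ioc, Set.mem_Ioc] at ha hb
      obtain ⟨ha1, hav⟩ := hsub a (Finset.mem_Ioc.2 ha)
      obtain ⟨hb1, hbv⟩ := hsub b (Finset.mem_Ioc.2 hb)
      have hane : (fib w a).Nonempty := (hw.2.1 a ha1 (le_trans hav hvk)).1
      have hbne : (fib w b).Nonempty := (hw.2.1 b hb1 (le_trans hbv hvk)).1
      have := w_fpos hn hane
      rw [hab, w_fpos hn hbne] at this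
      exact this.symm
    rw [Finset.card_image_of_injOn hinj, Nat.card_Ioc, Nat.sub_zero]

lemma perValue (hn : 0 < n) (hw : IsRGF2 n k w) {v : ℕ} (hv0 : 0 < v) (hvk : v ≤ k) :
    (Tset hn w v).card + (v + ((fib w v).card - 1)) ≤ (lpos hn w v : ℕ) + 1 := by
  obtain ⟨hsub, hcard⟩ := img_G hn hw hv0 hvk
  have h1 : v - 1 + ((fib w v).card - 1) ≤ (Gset hn w v).card := by
    rw [← hcard]; exact Finset.card_le_card hsub
  have h2 := TG_card hn w v
  omega

/-! ### summing up: the upper bound -/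

lemma sum_D (hw : IsRGF2 n k w) :
    (∑ v ∈ Finset.Ioc 0 k, ((fib w v).card - 1)) + k = n := by
  have h := sum_card_fib hw
  calc (∑ v ∈ Finset.Ioc 0 k, ((fib w v).card - 1)) + k
      = ∑ v ∈ Finset.Ioc 0 k, (((fib w v).card - 1) + 1) := by
        rw [Finset.sum_add_distrib]; simp
    _ = ∑ v ∈ Finset.Ioc 0 k, (fib w v).card := by
        apply Finset.sum_congr rfl
        intro v hv
        simp only [Finset.mem_Ioc] at hv
        have : 1 ≤ (fib w v).card := Finset.card_pos.2 (hw.2.1 v hv.1 hv.2).1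
        omega
    _ = n := h

lemma L_injOn (hn : 0 < n) (hw : IsRGF2 n k w) :
    Set.InjOn (fun v => (lpos hn w v : ℕ) + 1) (Finset.Ioc 0 k) := by
  intro a ha b hb hab
  simp only [Finset.coe_Ioc, Set.mem_Ioc] at ha hb
  have hane : (fib w a).Nonempty := (hw.2.1 a ha.1 ha.2).1
  have hbne : (fib w b).Nonempty := (hw.2.1 b hb.1 hb.2).1
  have hab' : (lpos hn w a : ℕ) + 1 = (lpos hn w b : ℕ) + 1 := hab
  have hv : lpos hn w a = lpos hn w b := Fin.ext (by omega)
  have := w_lpos hn hane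
  rw [hv, w_lpos hn hbne] at this
  exact this.symm

lemma L_image_spec (hn : 0 < n) (hw : IsRGF2 n k w) :
    ((Finset.Ioc 0 k).image (fun v => (lpos hn w v : ℕ) + 1)) ⊆ Finset.Ioc 0 n ∧
    ((Finset.Ioc 0 k).image (fun v => (lpos hn w v : ℕ) + 1)).card = k := by
  constructor
  · intro x hx
    obtain ⟨v, _, rfl⟩ := Finset.mem_image.1 hx
    simp only [Finset.mem_Ioc]
    exact ⟨Nat.succ_pos _, (lpos hn w v).2⟩
  · rw [Finset.card_image_of_injOn (L_injOn hn hw), Nat.card_Ioc, Nat.sub_zero]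

lemma sum_L_le (hn : 0 < n) (hw : IsRGF2 n k w) :
    (∑ v ∈ Finset.Ioc 0 k, ((lpos hn w v : ℕ) + 1)) ≤ ∑ i ∈ Finset.Ioc (n - k) n, i := by
  obtain ⟨hsub, hcard⟩ := L_image_spec hn hw
  have h1 : (∑ x ∈ (Finset.Ioc 0 k).image (fun v => (lpos hn w v : ℕ) + 1), x)
      = ∑ v ∈ Finset.Ioc 0 k, ((lpos hn w v : ℕ) + 1) :=
    Finset.sum_image (fun a ha b hb h =>
      L_injOn hn hw (Finset.mem_coe.2 ha) (Finset.mem_coe.2 hb) h)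
  rw [← h1]
  exact (topSum n k _ hsub hcard).1

theorem upper_bound (hw : IsRGF2 n k w) : rsStat w ≤ (n - k) * (k - 1) := by
  rcases Nat.eq_zero_or_pos n with hn0 | hn
  · subst hn0
    simp [rsStat]
  obtain ⟨hkn, hn2k⟩ := bounds hw
  have hk1 : 1 ≤ k := by omega
  have hchain : (∑ v ∈ Finset.Ioc 0 k, ((Tset hn w v).card + (v + ((fib w v).card - 1))))
      ≤ ∑ i ∈ Finset.Ioc (n - k) n, i := by
    calc _ ≤ ∑ v ∈ Finset.Ioc 0 k, ((lpos hn w v : ℕ) + 1) := by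
          apply Finset.sum_le_sum
          intro v hv
          simp only [Finset.mem_Ioc] at hv
          exact perValue hn hw hv.1 hv.2
      _ ≤ _ := sum_L_le hn hw
  have hsplit : (∑ v ∈ Finset.Ioc 0 k, ((Tset hn w v).card + (v + ((fib w v).card - 1))))
      = rsStat w + (∑ v ∈ Finset.Ioc 0 k, v) + (n - k) := by
    rw [rs_eq hn hw.1]
    rw [Finset.sum_add_distrib, Finset.sum_add_distrib]
    have := sum_D hw
    omega
  have htop := sum_Ioc_top n k hkn
  have hmul : (n - k) * (k - 1) + (n - k) = k * (n - k) := by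
    have h1 : k - 1 + 1 = k := by omega
    calc (n - k) * (k - 1) + (n - k) = (n - k) * ((k - 1) + 1) := (Nat.mul_succ _ _).symm
      _ = (n - k) * k := by rw [h1]
      _ = k * (n - k) := Nat.mul_comm _ _
  omega

/-! ### the equality case -/

theorem eq_case (hw : IsRGF2 n k w) (heq : rsStat w = (n - k) * (k - 1)) : w = wstar n k := by
  classical
  rcases Nat.eq_zero_or_pos n with hn0 | hn
  · subst hn0; funext j; exact j.elim0
  obtain ⟨hkn, hn2k⟩ := bounds hw
  have hk1 : 1 ≤ k := by omega
  -- notation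
  set D : ℕ → ℕ := fun v => (fib w v).card - 1 with hD
  set L : ℕ → ℕ := fun v => (lpos hn w v : ℕ) + 1 with hL
  -- the chain of inequalities is tight
  have hchain1 : ∀ v ∈ Finset.Ioc 0 k, (Tset hn w v).card + (v + D v) ≤ L v := by
    intro v hv
    simp only [Finset.mem_Ioc] at hv
    exact perValue hn hw hv.1 hv.2
  have hsplit : (∑ v ∈ Finset.Ioc 0 k, ((Tset hn w v).card + (v + D v)))
      = rsStat w + (∑ v ∈ Finset.Ioc 0 k, v) + (n - k) := by
    rw [rs_eq hn hw.1, Finset.sum_add_distrib, Finset.sum_add_distrib]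
    have hsD : (∑ v ∈ Finset.Ioc 0 k, D v) + k = n := sum_D hw
    omega
  have htop := sum_Ioc_top n k hkn
  have hmul : (n - k) * (k - 1) + (n - k) = k * (n - k) := by
    have h1 : k - 1 + 1 = k := by omega
    calc (n - k) * (k - 1) + (n - k) = (n - k) * ((k - 1) + 1) := (Nat.mul_succ _ _).symm
      _ = (n - k) * k := by rw [h1]
      _ = k * (n - k) := Nat.mul_comm _ _
  have hS2 : (∑ v ∈ Finset.Ioc 0 k, ((Tset hn w v).card + (v + D v)))
      ≤ ∑ v ∈ Finset.Ioc 0 k, L v := Finset.sum_le_sum hchain1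
  have hS3 : (∑ v ∈ Finset.Ioc 0 k, L v) ≤ ∑ i ∈ Finset.Ioc (n - k) n, i := sum_L_le hn hw
  have hSeq : (∑ v ∈ Finset.Ioc 0 k, ((Tset hn w v).card + (v + D v)))
      = ∑ i ∈ Finset.Ioc (n - k) n, i := by omega
  have hLeq : (∑ v ∈ Finset.Ioc 0 k, L v) = ∑ i ∈ Finset.Ioc (n - k) n, i := by omega
  -- pointwise equality
  have hpt : ∀ v ∈ Finset.Ioc 0 k, (Tset hn w v).card + (v + D v) = L v :=
    (Finset.sum_eq_sum_iff_of_le hchain1).1 (by omega)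
  -- the image of `L` is the top interval
  have himg : (Finset.Ioc 0 k).image L = Finset.Ioc (n - k) n := by
    obtain ⟨hsub, hcard⟩ := L_image_spec hn hw
    apply (topSum n k _ hsub hcard).2
    have h1 : (∑ x ∈ (Finset.Ioc 0 k).image L, x) = ∑ v ∈ Finset.Ioc 0 k, L v :=
      Finset.sum_image (fun a ha b hb h =>
        L_injOn hn hw (Finset.mem_coe.2 ha) (Finset.mem_coe.2 hb) h)
    rw [h1, hLeq]
  -- G sets are exactly the first-occurrence images
  have hGeq : ∀ v, 0 < v → v ≤ k →
      Gset hn w v = Finset.image (fpos hn w) (Finset.Ioc 0 (v - 1 + D v)) := by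
    intro v hv0 hvk
    obtain ⟨hsub, hcard⟩ := img_G hn hw hv0 hvk
    have h1 := hpt v (Finset.mem_Ioc.2 ⟨hv0, hvk⟩)
    have h2 := TG_card hn w v
    refine (Finset.eq_of_subset_of_card_le hsub ?_).symm
    rw [hcard]
    simp only [hL] at h1
    have hDv : D v = (fib w v).card - 1 := rfl
    omega
  -- (c1) key extraction
  have c1 : ∀ v, 0 < v → v ≤ k → ∀ j : Fin n, w j ≤ v → j < lpos hn w v →
      j = fpos hn w (w j) := by
    intro v hv0 hvk j hjv hjl
    have hj : j ∈ Gset hn w v := by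
      simp only [Gset, Finset.mem_filter, Finset.mem_univ, true_and]
      exact ⟨hjv, hjl⟩
    rw [hGeq v hv0 hvk] at hj
    obtain ⟨u, hu, rfl⟩ := Finset.mem_image.1 hj
    simp only [Finset.mem_Ioc] at hu
    have hD2 : (fib w v).card ≤ 2 := (hw.2.1 v hv0 hvk).2
    have hune : (fib w u).Nonempty := (hw.2.1 u hu.1 (by simp only [hD] at hu; omega)).1
    rw [w_fpos hn hune]
  -- (c2) dominating property of doubletons
  have c2 : ∀ v v', 0 < v → v < v' → v' ≤ k → (fib w v).card = 2 →
      lpos hn w v' < lpos hn w v := by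
    intro v v' hv0 hvv' hv'k h2
    have hvne : (fib w v).Nonempty := Finset.card_pos.1 (by omega)
    have hv'ne : (fib w v').Nonempty := (hw.2.1 v' (by omega) hv'k).1
    rcases lt_trichotomy (lpos hn w v) (lpos hn w v') with h | h | h
    · exfalso
      have := c1 v' (by omega) hv'k (lpos hn w v) (by rw [w_lpos hn hvne]; omega) h
      rw [w_lpos hn hvne] at this
      have := fpos_lt_lpos hn h2
      omega
    · exfalso
      have h1 := w_lpos hn hvne
      rw [h] at h1
      rw [w_lpos hn hv'ne] at h1
      omega
    · exact h
  -- (c3) every high position is a last position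
  have c3 : ∀ p : Fin n, n - k ≤ (p : ℕ) → ∃ v, 0 < v ∧ v ≤ k ∧ lpos hn w v = p := by
    intro p hp
    have hmem : (p : ℕ) + 1 ∈ Finset.Ioc (n - k) n := Finset.mem_Ioc.2 ⟨by omega, p.2⟩
    rw [← himg] at hmem
    obtain ⟨v, hv, hL1⟩ := Finset.mem_image.1 hmem
    simp only [Finset.mem_Ioc] at hv
    simp only [hL] at hL1
    exact ⟨v, hv.1, hv.2, Fin.ext (by omega)⟩
  -- (c4) doubleton first positions are low
  have c4 : ∀ v, 0 < v → (fib w v).card = 2 → (fpos hn w v : ℕ) < n - k := by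
    intro v hv0 h2
    have hvne : (fib w v).Nonempty := Finset.card_pos.1 (by omega)
    have hvk : v ≤ k := by
      obtain ⟨i, hi⟩ := hvne
      have := (hw.1 i).2
      rw [mem_fib.1 hi] at this
      exact this
    by_contra h
    push_neg at h
    obtain ⟨v', hv'0, hv'k, hv'⟩ := c3 (fpos hn w v) h
    have h1 := w_lpos hn ((hw.2.1 v' hv'0 hv'k).1)
    rw [hv', w_fpos hn hvne] at h1
    subst h1
    have := fpos_lt_lpos hn h2
    rw [hv'] at this
    exact lt_irrefl _ this
  -- (c5) first positions grow at least linearly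
  have c5 : ∀ v, 0 < v → v ≤ k → v - 1 ≤ (fpos hn w v : ℕ) := by
    intro v hv0 hvk
    have hinj : Set.InjOn (fpos hn w) (Finset.Ioc 0 (v - 1)) := by
      intro a ha b hb hab
      simp only [Finset.coe_Ioc, Set.mem_Ioc] at ha hb
      have hane : (fib w a).Nonempty := (hw.2.1 a ha.1 (by omega)).1
      have hbne : (fib w b).Nonempty := (hw.2.1 b hb.1 (by omega)).1
      have := w_fpos hn hane
      rw [hab, w_fpos hn hbne] at this
      exact this.symm
    have hcard : (Finset.image (fpos hn w) (Finset.Ioc 0 (v - 1))).card = v - 1 := by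
      rw [Finset.card_image_of_injOn hinj, Nat.card_Ioc, Nat.sub_zero]
    have hlt : ∀ x ∈ Finset.image (fpos hn w) (Finset.Ioc 0 (v - 1)), x < fpos hn w v := by
      intro x hx
      obtain ⟨u, hu, rfl⟩ := Finset.mem_image.1 hx
      simp only [Finset.mem_Ioc] at hu
      exact fpos_strictMono hn hw hu.1 hvk (by omega)
    have := card_le_of_lt hlt
    omega
  -- (c6) doubletons are exactly the values `1, …, n - k`
  have c6 : ∀ v, 0 < v → v ≤ k → ((fib w v).card = 2 ↔ v ≤ n - k) := by
    have hDbl : (Finset.Ioc 0 k).filter (fun v => (fib w v).card = 2) = Finset.Ioc 0 (n - k) := by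
      apply Finset.eq_of_subset_of_card_le
      · intro v hv
        obtain ⟨hv1, hv2⟩ := Finset.mem_filter.1 hv
        simp only [Finset.mem_Ioc] at hv1 ⊢
        have := c4 v hv1.1 hv2
        have := c5 v hv1.1 hv1.2
        omega
      · have hcount : ((Finset.Ioc 0 k).filter (fun v => (fib w v).card = 2)).card
            = ∑ v ∈ Finset.Ioc 0 k, D v := by
          rw [Finset.card_filter]
          apply Finset.sum_congr rfl
          intro v hv
          simp only [Finset.mem_Ioc] at hv
          have h1 : 1 ≤ (fib w v).card := Finset.card_pos.2 (hw.2.1 v hv.1 hv.2).1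
          have h2 : (fib w v).card ≤ 2 := (hw.2.1 v hv.1 hv.2).2
          simp only [hD]
          rcases Nat.lt_or_ge (fib w v).card 2 with h | h
          · rw [if_neg (by omega)]; omega
          · rw [if_pos (by omega)]; omega
        have hsD : (∑ v ∈ Finset.Ioc 0 k, D v) + k = n := sum_D hw
        rw [Nat.card_Ioc, Nat.sub_zero, hcount]
        omega
    intro v hv0 hvk
    constructor
    · intro h2
      have : v ∈ Finset.Ioc 0 (n - k) := by
        rw [← hDbl]
        exact Finset.mem_filter.2 ⟨Finset.mem_Ioc.2 ⟨hv0, hvk⟩, h2⟩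
      simpa using (Finset.mem_Ioc.1 this).2
    · intro hvnk
      have : v ∈ (Finset.Ioc 0 k).filter (fun v => (fib w v).card = 2) := by
        rw [hDbl]; exact Finset.mem_Ioc.2 ⟨hv0, hvnk⟩
      exact (Finset.mem_filter.1 this).2
  -- (c7) every first position is below every doubleton last position
  have c7 : ∀ u v, 0 < u → (fib w u).card = 2 → 0 < v → v ≤ k →
      fpos hn w v < lpos hn w u := by
    intro u v hu0 hu2 hv0 hvk
    have hune : (fib w u).Nonempty := Finset.card_pos.1 (by omega)
    have huk : u ≤ k := by
      have := c6
      obtain ⟨i, hi⟩ := hune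
      have := (hw.1 i).2
      rw [mem_fib.1 hi] at this
      exact this
    rcases lt_trichotomy v u with h | rfl | h
    · exact lt_of_lt_of_le (lt_of_lt_of_le (fpos_strictMono hn hw hv0 huk h)
        (fpos_le_lpos hn hune)) (le_refl _)
    · exact fpos_lt_lpos hn hu2
    · have hvne : (fib w v).Nonempty := (hw.2.1 v hv0 hvk).1
      exact lt_of_le_of_lt (fpos_le_lpos hn hvne) (c2 u v hu0 h hvk hu2)
  -- generic injectivity helpers
  have hfinj : ∀ m, m ≤ k → Set.InjOn (fpos hn w) (Finset.Ioc 0 m) := by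
    intro m hm a ha b hb hab
    simp only [Finset.coe_Ioc, Set.mem_Ioc] at ha hb
    have hane : (fib w a).Nonempty := (hw.2.1 a ha.1 (by omega)).1
    have hbne : (fib w b).Nonempty := (hw.2.1 b hb.1 (by omega)).1
    have := w_fpos hn hane
    rw [hab, w_fpos hn hbne] at this
    exact this.symm
  have hfinj' : ∀ m m', 0 < m → m' ≤ k → Set.InjOn (fpos hn w) (Finset.Ioc m m') := by
    intro m m' hm hm' a ha b hb hab
    simp only [Finset.coe_Ioc, Set.mem_Ioc] at ha hb
    have hane : (fib w a).Nonempty := (hw.2.1 a (by omega) (by omega)).1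
    have hbne : (fib w b).Nonempty := (hw.2.1 b (by omega) (by omega)).1
    have := w_fpos hn hane
    rw [hab, w_fpos hn hbne] at this
    exact this.symm
  have hlinj : ∀ m m', m' ≤ k → Set.InjOn (lpos hn w) (Finset.Ioc m m') := by
    intro m m' hm' a ha b hb hab
    simp only [Finset.coe_Ioc, Set.mem_Ioc] at ha hb
    have hane : (fib w a).Nonempty := (hw.2.1 a (by omega) (by omega)).1
    have hbne : (fib w b).Nonempty := (hw.2.1 b (by omega) (by omega)).1
    have := w_lpos hn hane
    rw [hab, w_lpos hn hbne] at this
    exact this.symm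
  -- disjointness of first-position images and doubleton last-position images
  have hdisjFL : ∀ m m' a b, a ≤ k → b ≤ n - k →
      Disjoint (Finset.image (fpos hn w) (Finset.Ioc m a))
        (Finset.image (lpos hn w) (Finset.Ioc m' b)) := by
    intro m m' a b hak hbk
    rw [Finset.disjoint_left]
    intro x hx hx'
    obtain ⟨p, hp, rfl⟩ := Finset.mem_image.1 hx
    obtain ⟨q, hq, hqe⟩ := Finset.mem_image.1 hx'
    simp only [Finset.mem_Ioc] at hp hq
    have hpne : (fib w p).Nonempty := (hw.2.1 p (by omega) (by omega)).1
    have hqne : (fib w q).Nonempty := (hw.2.1 q (by omega) (by omega)).1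
    have h1 : q = p := by
      have h2 := w_fpos hn hpne
      rw [← hqe, w_lpos hn hqne] at h2
      exact h2
    have hq2 : (fib w q).card = 2 := (c6 q (by omega) (by omega)).2 (by omega)
    have hcontra : fpos hn w q < fpos hn w q :=
      calc fpos hn w q < lpos hn w q := fpos_lt_lpos hn hq2
        _ = fpos hn w p := hqe
        _ = fpos hn w q := by rw [h1]
    exact lt_irrefl _ hcontra
  -- (c8) all first positions are exact
  have c8 : ∀ v, 0 < v → v ≤ k → (fpos hn w v : ℕ) = v - 1 := by
    intro v hv0 hvk
    have hge := c5 v hv0 hvk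
    set S : Finset (Fin n) := Finset.image (fpos hn w) (Finset.Ioc v k) ∪
      Finset.image (lpos hn w) (Finset.Ioc 0 (n - k)) with hS
    have hcard : S.card = (k - v) + (n - k) := by
      rw [hS, Finset.card_union_of_disjoint (hdisjFL v 0 k (n - k) (le_refl _) (le_refl _)),
        Finset.card_image_of_injOn (hfinj' v k hv0 (le_refl _)),
        Finset.card_image_of_injOn (hlinj 0 (n - k) (by omega)),
        Nat.card_Ioc, Nat.card_Ioc, Nat.sub_zero]
    have hgt : ∀ x ∈ S, fpos hn w v < x := by
      intro x hx
      rw [hS, Finset.mem_union] at hx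
      rcases hx with hx | hx
      · obtain ⟨a, ha, rfl⟩ := Finset.mem_image.1 hx
        simp only [Finset.mem_Ioc] at ha
        exact fpos_strictMono hn hw hv0 ha.2 ha.1
      · obtain ⟨b, hb, rfl⟩ := Finset.mem_image.1 hx
        simp only [Finset.mem_Ioc] at hb
        exact c7 b v hb.1 ((c6 b hb.1 (by omega)).2 hb.2) hv0 hvk
    have := card_le_of_gt hgt
    omega
  -- (c9) doubleton last positions are exact
  have c9 : ∀ u, 0 < u → u ≤ n - k → (lpos hn w u : ℕ) = n - u := by
    intro u hu0 hunk
    have huk : u ≤ k := by omega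
    have hu2 : (fib w u).card = 2 := (c6 u hu0 huk).2 hunk
    -- upper bound
    have hup : (lpos hn w u : ℕ) ≤ n - u := by
      set S : Finset (Fin n) := Finset.image (lpos hn w) (Finset.Ioc 0 (u - 1)) with hS
      have hcard : S.card = u - 1 := by
        rw [hS, Finset.card_image_of_injOn (hlinj 0 (u - 1) (by omega)),
          Nat.card_Ioc, Nat.sub_zero]
      have hgt : ∀ x ∈ S, lpos hn w u < x := by
        intro x hx
        obtain ⟨b, hb, rfl⟩ := Finset.mem_image.1 hx
        simp only [Finset.mem_Ioc] at hb
        exact c2 b u hb.1 (by omega) huk ((c6 b hb.1 (by omega)).2 (by omega))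
      have := card_le_of_gt hgt
      omega
    -- lower bound
    have hlo : n - u ≤ (lpos hn w u : ℕ) := by
      set S : Finset (Fin n) := Finset.image (fpos hn w) (Finset.Ioc 0 k) ∪
        Finset.image (lpos hn w) (Finset.Ioc u (n - k)) with hS
      have hcard : S.card = k + (n - k - u) := by
        rw [hS, Finset.card_union_of_disjoint (hdisjFL 0 u k (n - k) (le_refl _) (le_refl _)),
          Finset.card_image_of_injOn (hfinj k (le_refl _)),
          Finset.card_image_of_injOn (hlinj u (n - k) (by omega)),
          Nat.card_Ioc, Nat.card_Ioc, Nat.sub_zero]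
      have hlt : ∀ x ∈ S, x < lpos hn w u := by
        intro x hx
        rw [hS, Finset.mem_union] at hx
        rcases hx with hx | hx
        · obtain ⟨a, ha, rfl⟩ := Finset.mem_image.1 hx
          simp only [Finset.mem_Ioc] at ha
          exact c7 u a hu0 hu2 ha.1 ha.2
        · obtain ⟨b, hb, rfl⟩ := Finset.mem_image.1 hx
          simp only [Finset.mem_Ioc] at hb
          exact c2 u b hu0 hb.1 (by omega) hu2
      have := card_le_of_lt hlt
      omega
    omega
  -- conclusion
  funext j
  show w j = wstar n k j
  simp only [wstar]
  by_cases hj : (j : ℕ) < k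
  · rw [if_pos hj]
    have hne : (fib w ((j : ℕ) + 1)).Nonempty := (hw.2.1 _ (by omega) (by omega)).1
    have h1 : (fpos hn w ((j : ℕ) + 1) : ℕ) = (j : ℕ) := by
      rw [c8 ((j : ℕ) + 1) (by omega) (by omega)]
      omega
    have h2 : fpos hn w ((j : ℕ) + 1) = j := Fin.ext h1
    have := w_fpos hn hne
    rw [h2] at this
    exact this
  · rw [if_neg hj]
    push_neg at hj
    have hu0 : 0 < w j := (hw.1 j).1
    have huk : w j ≤ k := (hw.1 j).2
    have hjf : j ∈ fib w (w j) := mem_fib.2 rfl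
    have hfv : (fpos hn w (w j) : ℕ) = w j - 1 := c8 (w j) hu0 huk
    have hne : fpos hn w (w j) ≠ j := by
      intro h
      have h2 := hfv
      rw [h] at h2
      omega
    have hc2 : (fib w (w j)).card = 2 := by
      have h1 : 1 ≤ (fib w (w j)).card := Finset.card_pos.2 ⟨j, hjf⟩
      have h2 : (fib w (w j)).card ≤ 2 := (hw.2.1 (w j) hu0 huk).2
      rcases Nat.lt_or_ge (fib w (w j)).card 2 with h | h
      · exfalso
        have hcard1 : (fib w (w j)).card = 1 := by omega
        obtain ⟨x, hx⟩ := Finset.card_eq_one.1 hcard1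
        have hj1 : j = x := by
          have := hjf; rw [hx] at this; simpa using this
        have hj2 : fpos hn w (w j) = x := by
          have := fpos_mem hn (⟨j, hjf⟩ : (fib w (w j)).Nonempty)
          rw [hx] at this; simpa using this
        exact hne (hj2.trans hj1.symm)
      · omega
    have hunk : w j ≤ n - k := (c6 (w j) hu0 huk).1 hc2
    rcases eq_fpos_or_lpos hn hc2 hjf with h | h
    · exact absurd h.symm hne
    · have hjv : (j : ℕ) = n - w j := by
        conv_lhs => rw [h]
        exact c9 (w j) hu0 hunk
      omega

/-! ### properties of the extremal word -/

section Wstar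

lemma wstar_val {v : ℕ} (hv0 : 0 < v) {i : Fin n} (hi : i ∈ fib (wstar n k) v) :
    (i : ℕ) = v - 1 ∨ (i : ℕ) = n - v := by
  rw [mem_fib, wstar] at hi
  have h2 := i.2
  by_cases h : (i : ℕ) < k
  · rw [if_pos h] at hi; left; omega
  · rw [if_neg h] at hi; right; omega

lemma wstar_first (hkn : k ≤ n) {v : ℕ} (hv0 : 0 < v) (hvk : v ≤ k) :
    (⟨v - 1, by omega⟩ : Fin n) ∈ fib (wstar n k) v := by
  have hlt : v - 1 < k := by omega
  rw [mem_fib]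
  show (if v - 1 < k then v - 1 + 1 else n - (v - 1)) = v
  rw [if_pos hlt]; omega

lemma wstar_second {v : ℕ} (hv0 : 0 < v) (hvnk : v ≤ n - k) :
    (⟨n - v, by omega⟩ : Fin n) ∈ fib (wstar n k) v := by
  have hge : ¬ (n - v < k) := by omega
  rw [mem_fib]
  show (if n - v < k then n - v + 1 else n - (n - v)) = v
  rw [if_neg hge]; omega

lemma wstar_low_mem {v : ℕ} (hvnk : n - k < v) (hvk : v ≤ k) {i : Fin n}
    (hi : i ∈ fib (wstar n k) v) : (i : ℕ) = v - 1 := by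
  have hv0 : 0 < v := by omega
  rcases wstar_val hv0 hi with h | h
  · exact h
  · rw [mem_fib, wstar] at hi
    have h2 := i.2
    by_cases hik : (i : ℕ) < k
    · rw [if_pos hik] at hi; omega
    · rw [if_neg hik] at hi; omega

lemma wstar_isRGF2 (hkn : k ≤ n) (h2k : n ≤ 2 * k) : IsRGF2 n k (wstar n k) := by
  refine ⟨?_, ?_, ?_⟩
  · intro i
    rw [wstar]
    have h2 := i.2
    by_cases h : (i : ℕ) < k
    · rw [if_pos h]; omega
    · rw [if_neg h]; omega
  · intro v hv1 hvk
    constructor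
    · exact ⟨_, wstar_first hkn (by omega) hvk⟩
    · have hsub : fib (wstar n k) v ⊆
          insert (⟨v - 1, by omega⟩ : Fin n) {(⟨n - v, by omega⟩ : Fin n)} := by
        intro i hi
        rcases wstar_val (by omega : 0 < v) hi with h | h
        · exact Finset.mem_insert.2 (Or.inl (Fin.ext h))
        · exact Finset.mem_insert.2 (Or.inr (Finset.mem_singleton.2 (Fin.ext h)))
      exact le_trans (Finset.card_le_card hsub) (le_trans (Finset.card_insert_le _ _) (by simp))
  · intro j v hv1 hvj
    have h2 := j.2
    have hwk : wstar n k j ≤ k := by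
      rw [wstar]
      by_cases h : (j : ℕ) < k
      · rw [if_pos h]; omega
      · rw [if_neg h]; omega
    have hvk : v ≤ k := by omega
    have hvj' : v - 1 < (j : ℕ) := by
      rw [wstar] at hvj
      by_cases h : (j : ℕ) < k
      · rw [if_pos h] at hvj; omega
      · rw [if_neg h] at hvj; omega
    exact ⟨⟨v - 1, by omega⟩, by rw [Fin.lt_def]; exact hvj',
      mem_fib.1 (wstar_first hkn (by omega) hvk)⟩

lemma lpos_wstar_low (h2k : n ≤ 2 * k) (hn : 0 < n) {v : ℕ} (hv0 : 0 < v) (hvnk : v ≤ n - k) :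
    (lpos hn (wstar n k) v : ℕ) = n - v := by
  have hB := wstar_second (n := n) (k := k) hv0 hvnk
  have h1 := le_lpos hn hB
  have h2 := wstar_val hv0 (lpos_mem hn ⟨_, hB⟩)
  rw [Fin.le_def] at h1
  have h3 : ((⟨n - v, by omega⟩ : Fin n) : ℕ) = n - v := rfl
  rw [h3] at h1
  omega

lemma lpos_wstar_high (hkn : k ≤ n) (hn : 0 < n) {v : ℕ} (hvnk : n - k < v) (hvk : v ≤ k) :
    (lpos hn (wstar n k) v : ℕ) = v - 1 := by
  have hA := wstar_first (n := n) (k := k) hkn (by omega) hvk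
  exact wstar_low_mem hvnk hvk (lpos_mem hn ⟨_, hA⟩)

lemma fpos_wstar (hkn : k ≤ n) (h2k : n ≤ 2 * k) (hn : 0 < n) {v : ℕ}
    (hv0 : 0 < v) (hvk : v ≤ k) :
    (fpos hn (wstar n k) v : ℕ) = v - 1 := by
  have hA := wstar_first (n := n) (k := k) hkn hv0 hvk
  have h1 := fpos_le hn hA
  rw [Fin.le_def] at h1
  have h3 : ((⟨v - 1, by omega⟩ : Fin n) : ℕ) = v - 1 := rfl
  rw [h3] at h1
  rcases wstar_val hv0 (fpos_mem hn ⟨_, hA⟩) with h | h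
  · exact h
  · by_cases hcase : v ≤ n - k
    · omega
    · exact wstar_low_mem (by omega) hvk (fpos_mem hn ⟨_, hA⟩)

lemma card_filter_Ico {n : ℕ} (a b : ℕ) (hb : b ≤ n) :
    (univ.filter (fun j : Fin n => a ≤ (j : ℕ) ∧ (j : ℕ) < b)).card = b - a := by
  have : (univ.filter (fun j : Fin n => a ≤ (j : ℕ) ∧ (j : ℕ) < b)) =
      (Finset.Ico a b).attachFin (fun m hm => lt_of_lt_of_le (Finset.mem_Ico.1 hm).2 hb) := by
    ext j; simp [Finset.mem_attachFin, Finset.mem_Ico]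
  rw [this, Finset.card_attachFin, Nat.card_Ico]

lemma Tset_wstar_low (h2k : n ≤ 2 * k) (hn : 0 < n) {v : ℕ} (hv0 : 0 < v) (hvnk : v ≤ n - k) :
    (Tset hn (wstar n k) v).card = n - 2 * v := by
  have hlp := lpos_wstar_low (n := n) (k := k) h2k hn hv0 hvnk
  have heq : Tset hn (wstar n k) v
      = univ.filter (fun j : Fin n => v ≤ (j : ℕ) ∧ (j : ℕ) < n - v) := by
    ext j
    simp only [Tset, Finset.mem_filter, Finset.mem_univ, true_and, Fin.lt_def, hlp]
    rw [wstar]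
    have h2 := j.2
    by_cases h : (j : ℕ) < k
    · rw [if_pos h]
      constructor
      · rintro ⟨ha, hb⟩; omega
      · rintro ⟨ha, hb⟩; omega
    · rw [if_neg h]
      constructor
      · rintro ⟨ha, hb⟩; omega
      · rintro ⟨ha, hb⟩; omega
  rw [heq, card_filter_Ico v (n - v) (by omega)]
  omega

lemma Tset_wstar_high (hkn : k ≤ n) (hn : 0 < n) {v : ℕ} (hvnk : n - k < v) (hvk : v ≤ k) :
    (Tset hn (wstar n k) v).card = 0 := by
  have hlp := lpos_wstar_high (n := n) (k := k) hkn hn hvnk hvk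
  rw [Finset.card_eq_zero, Finset.eq_empty_iff_forall_notMem]
  intro j hj
  simp only [Tset, Finset.mem_filter, Finset.mem_univ, true_and, Fin.lt_def, hlp] at hj
  obtain ⟨h1, h2⟩ := hj
  rw [wstar] at h1
  have hjk : (j : ℕ) < k := by omega
  rw [if_pos hjk] at h1
  omega

lemma sum_aux {n : ℕ} : ∀ m : ℕ, 2 * m ≤ n →
    (∑ v ∈ Finset.Ioc 0 m, (n - 2 * v)) = m * (n - m - 1) := by
  intro m
  induction m with
  | zero => intro _; simp
  | succ m ih =>
    intro hm
    have h1 : (∑ v ∈ Finset.Ioc 0 (m + 1), (n - 2 * v))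
        = (∑ v ∈ Finset.Ioc 0 m, (n - 2 * v)) + (n - 2 * (m + 1)) := by
      rw [← Finset.sum_Ioc_succ_top (by omega)]
    rw [h1, ih (by omega)]
    have e1 : m * (n - m - 1) = m * (n - m - 2) + m := by
      have h : n - m - 1 = (n - m - 2) + 1 := by omega
      rw [h, Nat.mul_succ]
    have e2 : (m + 1) * (n - (m + 1) - 1) = m * (n - m - 2) + (n - m - 2) := by
      have h : n - (m + 1) - 1 = n - m - 2 := by omega
      rw [h, Nat.succ_mul]
    omega

theorem rs_wstar (hkn : k ≤ n) (h2k : n ≤ 2 * k) :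
    rsStat (wstar n k) = (n - k) * (k - 1) := by
  rcases Nat.eq_zero_or_pos n with hn0 | hn
  · subst hn0
    have hk0 : k = 0 := by omega
    subst hk0
    simp [rsStat]
  rw [rs_eq hn (wstar_isRGF2 (n := n) (k := k) hkn h2k).1]
  have hsplit : (∑ v ∈ Finset.Ioc 0 k, (Tset hn (wstar n k) v).card)
      = ∑ v ∈ Finset.Ioc 0 (n - k), (Tset hn (wstar n k) v).card := by
    refine (Finset.sum_subset ?_ ?_).symm
    · intro v hv
      simp only [Finset.mem_Ioc] at hv ⊢
      omega
    · intro v hv hv'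
      simp only [Finset.mem_Ioc] at hv hv'
      exact Tset_wstar_high hkn hn (by omega) hv.2
  rw [hsplit]
  have hcong : (∑ v ∈ Finset.Ioc 0 (n - k), (Tset hn (wstar n k) v).card)
      = ∑ v ∈ Finset.Ioc 0 (n - k), (n - 2 * v) := by
    apply Finset.sum_congr rfl
    intro v hv
    simp only [Finset.mem_Ioc] at hv
    exact Tset_wstar_low h2k hn hv.1 hv.2
  rw [hcong, sum_aux (n := n) (n - k) (by omega)]
  have h : n - (n - k) - 1 = k - 1 := by omega
  rw [h]

end Wstar

/-! ### partitions and their restricted growth functions -/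

section Partition

variable {P : SP n}

lemma blockOf_eq_of_mem {i : Fin n} {B : Finset (Fin n)} (hB : B ∈ P.parts) (hi : i ∈ B) :
    blockOf P i = B := by
  have hfilter : P.parts.filter (fun C => i ∈ C) = {B} := by
    ext C
    simp only [Finset.mem_filter, Finset.mem_singleton]
    constructor
    · rintro ⟨hC, hiC⟩
      exact P.eq_of_mem_parts hC hB hiC hi
    · rintro rfl
      exact ⟨hB, hi⟩
  rw [blockOf, hfilter, Finset.sup_singleton, id]

lemma blockOf_spec (i : Fin n) : blockOf P i ∈ P.parts ∧ i ∈ blockOf P i := by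
  obtain ⟨B, hB, hi⟩ := P.exists_mem (Finset.mem_univ i)
  rw [blockOf_eq_of_mem hB hi]
  exact ⟨hB, hi⟩

/-- The rank of a block: the number of blocks whose minimum is at most its minimum. -/
def rank (P : SP n) (B : Finset (Fin n)) : ℕ :=
  (P.parts.filter (fun C => C.min ≤ B.min)).card

lemma rgf_eq_rank (i : Fin n) : rgf P i = rank P (blockOf P i) := rfl

lemma min_le_min_iff {B C : Finset (Fin n)} (hB : B.Nonempty) (hC : C.Nonempty) :
    B.min ≤ C.min ↔ B.min' hB ≤ C.min' hC := by
  rw [← Finset.coe_min' hB, ← Finset.coe_min' hC]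
  exact WithTop.coe_le_coe

lemma rank_lt_rank {B C : Finset (Fin n)} (hB : B ∈ P.parts) (hC : C ∈ P.parts)
    (hBn : B.Nonempty) (hCn : C.Nonempty) (h : B.min' hBn < C.min' hCn) :
    rank P B < rank P C := by
  apply Finset.card_lt_card
  rw [Finset.ssubset_iff_of_subset]
  · refine ⟨C, Finset.mem_filter.2 ⟨hC, le_refl _⟩, ?_⟩
    intro hmem
    have := (Finset.mem_filter.1 hmem).2
    rw [min_le_min_iff hCn hBn] at this
    exact absurd h (not_lt.2 this)
  · intro D hD
    obtain ⟨hD1, hD2⟩ := Finset.mem_filter.1 hD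
    have hDn : D.Nonempty := P.nonempty_of_mem_parts hD1
    refine Finset.mem_filter.2 ⟨hD1, ?_⟩
    rw [min_le_min_iff hDn hCn]
    rw [min_le_min_iff hDn hBn] at hD2
    exact le_trans hD2 h.le

lemma rank_injOn {B C : Finset (Fin n)} (hB : B ∈ P.parts) (hC : C ∈ P.parts)
    (h : rank P B = rank P C) : B = C := by
  have hBn : B.Nonempty := P.nonempty_of_mem_parts hB
  have hCn : C.Nonempty := P.nonempty_of_mem_parts hC
  rcases lt_trichotomy (B.min' hBn) (C.min' hCn) with hlt | heq | hgt
  · exact absurd h (Nat.ne_of_lt (rank_lt_rank hB hC hBn hCn hlt))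
  · have h1 : B.min' hBn ∈ B := Finset.min'_mem _ _
    have h2 : C.min' hCn ∈ C := Finset.min'_mem _ _
    rw [heq] at h1
    exact P.eq_of_mem_parts hB hC h1 h2
  · exact absurd h.symm (Nat.ne_of_lt (rank_lt_rank hC hB hCn hBn hgt))

lemma rank_bounds {B : Finset (Fin n)} (hB : B ∈ P.parts) :
    1 ≤ rank P B ∧ rank P B ≤ P.parts.card := by
  constructor
  · exact Finset.card_pos.2 ⟨B, Finset.mem_filter.2 ⟨hB, le_refl _⟩⟩
  · exact Finset.card_le_card (Finset.filter_subset _ _)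

lemma rank_surj {v : ℕ} (hv0 : 0 < v) (hvk : v ≤ P.parts.card) :
    ∃ B ∈ P.parts, rank P B = v := by
  classical
  have hinj : Set.InjOn (rank P) P.parts := fun B hB C hC h =>
    rank_injOn (Finset.mem_coe.1 hB) (Finset.mem_coe.1 hC) h
  have himg : P.parts.image (rank P) = Finset.Ioc 0 P.parts.card := by
    apply Finset.eq_of_subset_of_card_le
    · intro x hx
      obtain ⟨B, hB, rfl⟩ := Finset.mem_image.1 hx
      exact Finset.mem_Ioc.2 ⟨(rank_bounds hB).1, (rank_bounds hB).2⟩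
    · rw [Nat.card_Ioc, Nat.sub_zero, Finset.card_image_of_injOn hinj]
  have : v ∈ P.parts.image (rank P) := by
    rw [himg]; exact Finset.mem_Ioc.2 ⟨hv0, hvk⟩
  obtain ⟨B, hB, hr⟩ := Finset.mem_image.1 this
  exact ⟨B, hB, hr⟩

lemma fib_rgf {B : Finset (Fin n)} (hB : B ∈ P.parts) : fib (rgf P) (rank P B) = B := by
  ext i
  rw [mem_fib, rgf_eq_rank]
  constructor
  · intro h
    have hbo := blockOf_spec (P := P) i
    have := rank_injOn hbo.1 hB h
    rw [← this]
    exact hbo.2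
  · intro hi
    rw [blockOf_eq_of_mem hB hi]

theorem rgf_isRGF2 (hk : P.parts.card = k) (hav : avoids123 P) : IsRGF2 n k (rgf P) := by
  refine ⟨?_, ?_, ?_⟩
  · intro i
    rw [rgf_eq_rank]
    have := rank_bounds (blockOf_spec (P := P) i).1
    omega
  · intro v hv1 hvk
    obtain ⟨B, hB, hr⟩ := rank_surj (P := P) (v := v) (by omega) (by omega)
    rw [← hr, fib_rgf hB]
    exact ⟨P.nonempty_of_mem_parts hB, hav B hB⟩
  · intro j v hv1 hvj
    obtain ⟨B, hB, hr⟩ := rank_surj (P := P) (v := v) (by omega)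
      (by rw [hk]; have := (rank_bounds (blockOf_spec (P := P) j).1).2; rw [rgf_eq_rank] at hvj; omega)
    have hBn : B.Nonempty := P.nonempty_of_mem_parts hB
    have hjB := blockOf_spec (P := P) j
    have hjBn : (blockOf P j).Nonempty := P.nonempty_of_mem_parts hjB.1
    have hlt : B.min' hBn < (blockOf P j).min' hjBn := by
      rcases lt_trichotomy (B.min' hBn) ((blockOf P j).min' hjBn) with h | h | h
      · exact h
      · exfalso
        have h1 : B.min' hBn ∈ B := Finset.min'_mem _ _
        have h2 : (blockOf P j).min' hjBn ∈ blockOf P j := Finset.min'_mem _ _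
        rw [h] at h1
        have := P.eq_of_mem_parts hB hjB.1 h1 h2
        rw [rgf_eq_rank, ← this, hr] at hvj
        omega
      · exfalso
        have := rank_lt_rank hjB.1 hB hjBn hBn h
        rw [rgf_eq_rank] at hvj
        omega
    refine ⟨B.min' hBn, ?_, ?_⟩
    · exact lt_of_lt_of_le hlt (Finset.min'_le _ _ hjB.2)
    · rw [rgf_eq_rank, blockOf_eq_of_mem hB (Finset.min'_mem _ _), hr]

theorem rgf_injective {P Q : SP n} (h : rgf P = rgf Q) : P = Q := by
  have hblock : ∀ i, blockOf P i = blockOf Q i := by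
    intro i
    have h1 : blockOf P i = fib (rgf P) (rgf P i) := (fib_rgf (blockOf_spec (P := P) i).1).symm
    have h2 : blockOf Q i = fib (rgf Q) (rgf Q i) := (fib_rgf (blockOf_spec (P := Q) i).1).symm
    rw [h1, h2, h]
  apply Finpartition.ext
  ext B
  constructor
  · intro hB
    obtain ⟨i, hi⟩ := P.nonempty_of_mem_parts hB
    rw [← blockOf_eq_of_mem hB hi, hblock i]
    exact (blockOf_spec (P := Q) i).1
  · intro hB
    obtain ⟨i, hi⟩ := Q.nonempty_of_mem_parts hB
    rw [← blockOf_eq_of_mem hB hi, ← hblock i]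
    exact (blockOf_spec (P := P) i).1

end Partition

/-! ### the extremal partition -/

lemma fib_injOn_Ioc {w : Fin n → ℕ} (hne : ∀ v ∈ Finset.Ioc 0 k, (fib w v).Nonempty) :
    Set.InjOn (fib w) (Finset.Ioc 0 k) := by
  intro a ha b hb hab
  obtain ⟨i, hi⟩ := hne a (Finset.mem_coe.1 ha)
  have h1 : w i = a := mem_fib.1 hi
  have h2 : w i = b := mem_fib.1 (hab ▸ hi)
  omega

def Pstar (n k : ℕ) (hkn : k ≤ n) (h2k : n ≤ 2 * k) : SP n where
  parts := (Finset.Ioc 0 k).image (fun v => fib (wstar n k) v)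
  supIndep := by
    rw [Finset.supIndep_iff_pairwiseDisjoint]
    intro a ha b hb hab
    obtain ⟨u, hu, rfl⟩ := Finset.mem_image.1 (Finset.mem_coe.1 ha)
    obtain ⟨v, hv, rfl⟩ := Finset.mem_image.1 (Finset.mem_coe.1 hb)
    have huv : u ≠ v := fun h => hab (by rw [h])
    simp only [Function.onFun, id]
    rw [Finset.disjoint_left]
    intro i hi hi'
    exact huv ((mem_fib.1 hi).symm.trans (mem_fib.1 hi'))
  sup_parts := by
    apply le_antisymm
    · exact Finset.sup_le (fun B _ => Finset.subset_univ B)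
    · intro i _
      rw [Finset.mem_sup]
      refine ⟨fib (wstar n k) (wstar n k i), ?_, mem_fib.2 rfl⟩
      apply Finset.mem_image_of_mem
      have := (wstar_isRGF2 hkn h2k).1 i
      exact Finset.mem_Ioc.2 ⟨by omega, by omega⟩
  bot_notMem := by
    intro h
    obtain ⟨v, hv, hfib⟩ := Finset.mem_image.1 h
    simp only [Finset.mem_Ioc] at hv
    have := ((wstar_isRGF2 hkn h2k).2.1 v hv.1 hv.2).1
    rw [hfib] at this
    exact Finset.not_nonempty_empty this

lemma Pstar_card (hkn : k ≤ n) (h2k : n ≤ 2 * k) : (Pstar n k hkn h2k).parts.card = k := by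
  have hne : ∀ v ∈ Finset.Ioc 0 k, (fib (wstar n k) v).Nonempty := by
    intro v hv
    simp only [Finset.mem_Ioc] at hv
    exact ((wstar_isRGF2 hkn h2k).2.1 v hv.1 hv.2).1
  show ((Finset.Ioc 0 k).image (fun v => fib (wstar n k) v)).card = k
  rw [Finset.card_image_of_injOn (fib_injOn_Ioc hne), Nat.card_Ioc, Nat.sub_zero]

lemma Pstar_avoids (hkn : k ≤ n) (h2k : n ≤ 2 * k) : avoids123 (Pstar n k hkn h2k) := by
  intro B hB
  obtain ⟨v, hv, rfl⟩ := Finset.mem_image.1 hB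
  simp only [Finset.mem_Ioc] at hv
  exact ((wstar_isRGF2 hkn h2k).2.1 v hv.1 hv.2).2

lemma fib_min (hn : 0 < n) {w : Fin n → ℕ} {v : ℕ} (h : (fib w v).Nonempty) :
    (fib w v).min = ((fpos hn w v : Fin n) : WithTop (Fin n)) := by
  rw [fpos, dif_pos h, Finset.coe_min']

lemma rgf_Pstar (hkn : k ≤ n) (h2k : n ≤ 2 * k) : rgf (Pstar n k hkn h2k) = wstar n k := by
  funext i
  have hn : 0 < n := i.pos
  have hw := wstar_isRGF2 (n := n) (k := k) hkn h2k
  have hne : ∀ v, 0 < v → v ≤ k → (fib (wstar n k) v).Nonempty :=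
    fun v ha hb => (hw.2.1 v ha hb).1
  have hwi := hw.1 i
  have hparts : (Pstar n k hkn h2k).parts = (Finset.Ioc 0 k).image (fun v => fib (wstar n k) v) :=
    rfl
  have hBmem : fib (wstar n k) (wstar n k i) ∈ (Pstar n k hkn h2k).parts := by
    rw [hparts]
    exact Finset.mem_image_of_mem _ (Finset.mem_Ioc.2 ⟨by omega, by omega⟩)
  have hblock : blockOf (Pstar n k hkn h2k) i = fib (wstar n k) (wstar n k i) :=
    blockOf_eq_of_mem hBmem (mem_fib.2 rfl)
  show (((Pstar n k hkn h2k).parts.filter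
      (fun B => B.min ≤ (blockOf (Pstar n k hkn h2k) i).min)).card) = wstar n k i
  rw [hblock]
  have hfilter : (Pstar n k hkn h2k).parts.filter
        (fun B => B.min ≤ (fib (wstar n k) (wstar n k i)).min)
      = (Finset.Ioc 0 (wstar n k i)).image (fun v => fib (wstar n k) v) := by
    ext B
    simp only [Finset.mem_filter, hparts, Finset.mem_image, Finset.mem_Ioc]
    constructor
    · rintro ⟨⟨u, hu, rfl⟩, hle⟩
      refine ⟨u, ⟨hu.1, ?_⟩, rfl⟩
      rw [fib_min hn (hne u hu.1 hu.2), fib_min hn (hne (wstar n k i) (by omega) (by omega)),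
        WithTop.coe_le_coe, Fin.le_def, fpos_wstar hkn h2k hn hu.1 hu.2,
        fpos_wstar hkn h2k hn (by omega) (by omega)] at hle
      omega
    · rintro ⟨u, hu, rfl⟩
      have huk : u ≤ k := by omega
      refine ⟨⟨u, ⟨hu.1, huk⟩, rfl⟩, ?_⟩
      rw [fib_min hn (hne u hu.1 huk), fib_min hn (hne (wstar n k i) (by omega) (by omega)),
        WithTop.coe_le_coe, Fin.le_def, fpos_wstar hkn h2k hn hu.1 huk,
        fpos_wstar hkn h2k hn (by omega) (by omega)]
      omega
  rw [hfilter, Finset.card_image_of_injOn, Nat.card_Ioc, Nat.sub_zero]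
  intro a ha b hb hab
  simp only [Finset.coe_Ioc, Set.mem_Ioc] at ha hb
  obtain ⟨j, hj⟩ := hne a ha.1 (by omega)
  have hab' : fib (wstar n k) a = fib (wstar n k) b := hab
  have ha1 : wstar n k j = a := mem_fib.1 hj
  have hb1 : wstar n k j = b := mem_fib.1 (hab' ▸ hj)
  omega

/-! ### from the extremal analysis to degree and leading coefficient -/

lemma poly_eval {α : Type*} (S : Finset α) (e : α → ℕ) (N : ℕ) (x0 : α)
    (hx0 : x0 ∈ S) (hx0N : e x0 = N) (hmax : ∀ x ∈ S, e x ≤ N)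
    (huniq : ∀ x ∈ S, e x = N → x = x0) :
    (∑ x ∈ S, (Polynomial.X : Polynomial ℕ) ^ (e x)).natDegree = N ∧
    (∑ x ∈ S, (Polynomial.X : Polynomial ℕ) ^ (e x)).leadingCoeff = 1 := by
  classical
  have hcN : (∑ x ∈ S, (Polynomial.X : Polynomial ℕ) ^ (e x)).coeff N = 1 := by
    rw [Polynomial.finset_sum_coeff]
    have hstep : ∀ x ∈ S, ((Polynomial.X : Polynomial ℕ) ^ (e x)).coeff N
        = if x = x0 then 1 else 0 := by
      intro x hx
      rw [Polynomial.coeff_X_pow]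
      by_cases h : x = x0
      · rw [if_pos h, if_pos (by rw [h, hx0N])]
      · rw [if_neg h, if_neg]
        intro hcontra
        exact h (huniq x hx hcontra.symm)
    rw [Finset.sum_congr rfl hstep, Finset.sum_ite_eq' S x0 (fun _ => 1), if_pos hx0]
  have hhigh : ∀ m : ℕ, N < m → (∑ x ∈ S, (Polynomial.X : Polynomial ℕ) ^ (e x)).coeff m = 0 := by
    intro m hm
    rw [Polynomial.finset_sum_coeff]
    apply Finset.sum_eq_zero
    intro x hx
    rw [Polynomial.coeff_X_pow, if_neg]
    have := hmax x hx
    omega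
  have hne : (∑ x ∈ S, (Polynomial.X : Polynomial ℕ) ^ (e x)) ≠ 0 := by
    intro h
    rw [h, Polynomial.coeff_zero] at hcN
    exact one_ne_zero hcN.symm
  have hdeg : (∑ x ∈ S, (Polynomial.X : Polynomial ℕ) ^ (e x)).natDegree = N := by
    apply le_antisymm
    · exact Polynomial.natDegree_le_iff_coeff_eq_zero.2 hhigh
    · exact Polynomial.le_natDegree_of_ne_zero (by rw [hcN]; exact one_ne_zero)
  refine ⟨hdeg, ?_⟩
  rw [Polynomial.leadingCoeff, hdeg, hcN]

end Aux18

/-- For `⌈n/2⌉ ≤ k ≤ n`, the degree of `RS_{n,k}(123, t)` is `(n-k)(k-1)`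
and its leading coefficient is `1`. -/
theorem stmt18 (n k : ℕ) (h1 : (n + 1) / 2 ≤ k) (h2 : k ≤ n) :
    (genPoly n k avoids123 rsStat).natDegree = (n - k) * (k - 1) ∧
    (genPoly n k avoids123 rsStat).leadingCoeff = 1 := by
  classical
  have h2k : n ≤ 2 * k := by omega
  have hmem : ∀ P : SP n,
      P ∈ Finset.univ.filter (fun P : SP n => P.parts.card = k ∧ avoids123 P)
      ↔ (P.parts.card = k ∧ avoids123 P) := by
    intro P
    simp [Finset.mem_filter]
  apply Aux18.poly_eval _ (fun P : SP n => rsStat (rgf P)) ((n - k) * (k - 1))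
    (Aux18.Pstar n k h2 h2k)
  · rw [hmem]
    exact ⟨Aux18.Pstar_card h2 h2k, Aux18.Pstar_avoids h2 h2k⟩
  · rw [Aux18.rgf_Pstar h2 h2k]
    exact Aux18.rs_wstar h2 h2k
  · intro P hP
    rw [hmem] at hP
    exact Aux18.upper_bound (Aux18.rgf_isRGF2 hP.1 hP.2)
  · intro P hP hPN
    rw [hmem] at hP
    have hrgf : rgf P = Aux18.wstar n k :=
      Aux18.eq_case (Aux18.rgf_isRGF2 hP.1 hP.2) hPN
    apply Aux18.rgf_injective
    rw [hrgf, Aux18.rgf_Pstar h2 h2k]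
end
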